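/- arXiv:2212.05060 — 10 statements merged into one kernel-verified Lean document; each statement's English description precedes it below -/
import Mathlib

section
/- Let X be a real Banach space, let x₀ ∈ X be a unit vector, and suppose X = span{x₀} ⊕_∞ N for some closed subspace N ⊆ X. If x ∈ X is a nonzero vector with dist(x, span{x₀}) < ‖x‖, then the norm of X is Fréchet differentiable at x. -/
open Filter Topology Metric Set NormedSpace MeasureTheory

noncomputable section

/-- The norm of `X` is Fréchet differentiable at `x`: there is a continuous linear
functional `f` with `lim_{y→0} (‖x+y‖ - ‖x‖ - f y)/‖y‖ = 0`. -/
def FrechetSmoothPoint (X : Type*) [NormedAddCommGroup X] [NormedSpace ℝ X] (x : X) : Prop :=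
  ∃ f : X →L[ℝ] ℝ,
    Tendsto (fun y : X => (‖x + y‖ - ‖x‖ - f y) / ‖y‖) (𝓝[≠] (0 : X)) (𝓝 0)

/-- `x` is a smooth point: it is nonzero and there is exactly one norm-one functional
attaining the norm at `x`. -/
def SmoothPoint (X : Type*) [NormedAddCommGroup X] [NormedSpace ℝ X] (x : X) : Prop :=
  x ≠ 0 ∧ ∃! f : StrongDual ℝ X, ‖f‖ = 1 ∧ f x = ‖x‖

/-- `x` is a very smooth point: it is a smooth point whose canonical image in the bidual
is a smooth point of the bidual. -/
def VerySmoothPoint (X : Type*) [NormedAddCommGroup X] [NormedSpace ℝ X] (x : X) : Prop :=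
  SmoothPoint X x ∧ SmoothPoint (StrongDual ℝ (StrongDual ℝ X)) (inclusionInDoubleDual ℝ X x)

/-- `X = M ⊕_∞ N`: `M, N` are closed subspaces with trivial intersection whose sum is
everything, and `‖m + n‖ = max ‖m‖ ‖n‖` for `m ∈ M`, `n ∈ N`. -/
def MSumDecomp {X : Type*} [NormedAddCommGroup X] [NormedSpace ℝ X]
    (M N : Submodule ℝ X) : Prop :=
  IsClosed (M : Set X) ∧ IsClosed (N : Set X) ∧ M ⊓ N = ⊥ ∧ M ⊔ N = ⊤ ∧
    ∀ m ∈ M, ∀ n ∈ N, ‖m + n‖ = max ‖m‖ ‖n‖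

/-- `X = M ⊕₁ N`: `M, N` are closed subspaces with trivial intersection whose sum is
everything, and `‖m + n‖ = ‖m‖ + ‖n‖` for `m ∈ M`, `n ∈ N`; such `M` is an L-summand. -/
def LSumDecomp {X : Type*} [NormedAddCommGroup X] [NormedSpace ℝ X]
    (M N : Submodule ℝ X) : Prop :=
  IsClosed (M : Set X) ∧ IsClosed (N : Set X) ∧ M ⊓ N = ⊥ ∧ M ⊔ N = ⊤ ∧
    ∀ m ∈ M, ∀ n ∈ N, ‖m + n‖ = ‖m‖ + ‖n‖

/-- The state space `S_x` of a vector `x`. -/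
def StateSpace {X : Type*} [NormedAddCommGroup X] [NormedSpace ℝ X] (x : X) :
    Set (StrongDual ℝ X) :=
  {f : StrongDual ℝ X | ‖f‖ ≤ 1 ∧ f x = 1}

/-- `x` is a quasi-polyhedral (QP) point: for some `δ > 0`, every norm-one `z` with
`‖z - x‖ < δ` has `S_z ⊆ S_x`. -/
def QPPoint (X : Type*) [NormedAddCommGroup X] [NormedSpace ℝ X] (x : X) : Prop :=
  ∃ δ > (0 : ℝ), ∀ z : X, ‖z‖ = 1 → ‖z - x‖ < δ → StateSpace z ⊆ StateSpace x

/-- `X` is an `L¹`-predual space: `X*` is isometrically isomorphic to `L¹(μ)` for some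
(positive) measure `μ`. -/
def IsL1Predual (X : Type*) [NormedAddCommGroup X] [NormedSpace ℝ X] : Prop :=
  ∃ (α : Type) (_ : MeasurableSpace α) (μ : Measure α),
    Nonempty (StrongDual ℝ X ≃ₗᵢ[ℝ] Lp ℝ 1 μ)

theorem frechet_smooth_of_MSumDecomp_span
    {X : Type*} [NormedAddCommGroup X] [NormedSpace ℝ X] [CompleteSpace X]
    (x₀ : X) (hx₀ : ‖x₀‖ = 1) (N : Submodule ℝ X)
    (hdec : MSumDecomp (Submodule.span ℝ {x₀}) N)
    (x : X) (hx : x ≠ 0)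
    (hdist : infDist x ((Submodule.span ℝ {x₀} : Submodule ℝ X) : Set X) < ‖x‖) :
    FrechetSmoothPoint X x := by
  obtain ⟨hMc, hNc, hinf, hsup, hmax⟩ := hdec
  have hx₀ne : x₀ ≠ 0 := by intro h; rw [h, norm_zero] at hx₀; norm_num at hx₀
  have hc : IsCompl (Submodule.span ℝ {x₀}) N :=
    ⟨disjoint_iff.mpr hinf, codisjoint_iff.mpr hsup⟩
  set P := Submodule.linearProjOfIsCompl _ N hc with hP
  set c := LinearEquiv.coord ℝ X x₀ hx₀ne with hcdef
  set g : X →ₗ[ℝ] ℝ := c.toLinearMap ∘ₗ P with hg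
  -- decomposition facts
  have hdecomp : ∀ y : X, y - g y • x₀ ∈ N := by
    intro y
    have h1 : (g y • x₀ : X) = (P y : X) := by
      have := LinearEquiv.coord_apply_smul ℝ X x₀ hx₀ne (P y)
      exact this
    rw [h1]
    have h0 := Submodule.projection_add_projection_eq_self hc y
    have h2 : y - (P y : X) = (N.linearProjOfIsCompl _ hc.symm y : X) := by
      rw [sub_eq_iff_eq_add']; exact h0.symm
    rw [h2]; exact Subtype.mem _
  have hspan : ∀ s : ℝ, (s • x₀ : X) ∈ Submodule.span ℝ {x₀} := fun s =>
    Submodule.smul_mem _ s (Submodule.mem_span_singleton_self x₀)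
  have hnorm : ∀ y : X, ‖y‖ = max |g y| ‖y - g y • x₀‖ := by
    intro y
    have hmx := hmax (g y • x₀) (hspan _) (y - g y • x₀) (hdecomp y)
    have h2 : ‖g y • x₀‖ = |g y| := by rw [norm_smul, hx₀, mul_one, Real.norm_eq_abs]
    calc ‖y‖ = ‖g y • x₀ + (y - g y • x₀)‖ := by rw [add_sub_cancel]
    _ = max |g y| ‖y - g y • x₀‖ := by rw [hmx, h2]
  -- continuity of g
  have hbound : ∀ y : X, ‖g y‖ ≤ 1 * ‖y‖ := by
    intro y
    rw [one_mul, hnorm y, Real.norm_eq_abs]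
    exact le_max_left _ _
  set f₀ : X →L[ℝ] ℝ := g.mkContinuous 1 hbound with hf₀
  have hf₀app : ∀ y, f₀ y = g y := fun y => rfl
  -- the decomposition of x
  set t : ℝ := g x with ht
  set n : X := x - t • x₀ with hn
  have hxnorm : ‖x‖ = max |t| ‖n‖ := hnorm x
  -- infDist ≥ ‖n‖
  have hge : ‖n‖ ≤ infDist x ((Submodule.span ℝ {x₀} : Submodule ℝ X) : Set X) := by
    by_contra hcon
    push_neg at hcon
    obtain ⟨m, hm, hdlt⟩ := (infDist_lt_iff ⟨0, Submodule.zero_mem _⟩).mp hcon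
    obtain ⟨s, rfl⟩ := Submodule.mem_span_singleton.mp hm
    rw [dist_eq_norm] at hdlt
    have hd : x - s • x₀ = (t - s) • x₀ + n := by rw [hn, sub_smul]; abel
    rw [hd, hmax _ (hspan _) n (by rw [hn]; exact hdecomp x)] at hdlt
    exact absurd (le_max_right ‖(t - s) • x₀‖ ‖n‖) (not_le.mpr hdlt)
  have h1 : ‖n‖ < max |t| ‖n‖ := by
    rw [← hxnorm]; exact lt_of_le_of_lt hge hdist
  have hnlt : ‖n‖ < |t| := by
    rcases le_or_gt |t| ‖n‖ with h | h
    · rw [max_eq_right h] at h1; exact absurd h1 (lt_irrefl _)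
    · exact h
  have htne : t ≠ 0 := fun h => by simp [h] at hnlt; linarith [norm_nonneg n, hnlt]
  have habs : |t| ≠ 0 := abs_ne_zero.mpr htne
  set σ : ℝ := t / |t| with hσ
  refine ⟨σ • f₀, ?_⟩
  set δ : ℝ := (|t| - ‖n‖) / 2 with hδ
  have hδpos : 0 < δ := by rw [hδ]; linarith
  have hδlt : δ < |t| := by
    rw [hδ]; have := norm_nonneg n; have := abs_nonneg t; linarith
  have hEvZero : ∀ y : X, ‖y‖ < δ → ‖x + y‖ - ‖x‖ - (σ • f₀) y = 0 := by
    intro y hy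
    have hgy : |g y| < δ := lt_of_le_of_lt (by
      have := hbound y; rw [one_mul, Real.norm_eq_abs] at this; exact this) hy
    -- norm of x + y
    have hgxy : g (x + y) = t + g y := by rw [map_add]
    have hrem : (x + y) - g (x + y) • x₀ = n + (y - g y • x₀) := by
      rw [hgxy, hn, add_smul]; abel
    have hremnorm : ‖(x + y) - g (x + y) • x₀‖ < |t + g y| := by
      rw [hrem]
      have h3 : ‖y - g y • x₀‖ ≤ ‖y‖ := by rw [hnorm y]; exact le_max_right _ _
      have h4 : ‖n + (y - g y • x₀)‖ ≤ ‖n‖ + ‖y‖ :=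
        le_trans (norm_add_le _ _) (by linarith)
      have h5 : |t| - |g y| ≤ |t + g y| := by
        have := abs_add_le (t + g y) (-g y)
        simp only [add_neg_cancel_right, abs_neg] at this
        linarith
      have hδeq : δ = (|t| - ‖n‖) / 2 := hδ
      have : ‖n‖ + ‖y‖ < |t| - |g y| := by
        rw [hδeq] at hy hgy; linarith
      linarith
    have hxy : ‖x + y‖ = |t + g y| := by
      rw [hgxy] at hremnorm
      rw [hnorm (x + y), hgxy]
      exact max_eq_left hremnorm.le
    have hxn : ‖x‖ = |t| := by rw [hxnorm, max_eq_left hnlt.le]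
    have happ : (σ • f₀) y = σ * g y := by
      simp [hf₀app, smul_eq_mul]
    rw [hxy, hxn, happ]
    have hgylt : |g y| < |t| := lt_trans hgy hδlt
    rcases lt_or_gt_of_ne htne with htneg | htpos
    · have habs' : |t| = -t := abs_of_neg htneg
      have hsum : t + g y < 0 := by
        have := abs_lt.mp hgylt; rw [habs'] at this; linarith [this.2]
      rw [abs_of_neg hsum, habs', hσ, habs']
      field_simp
      ring
    · have habs' : |t| = t := abs_of_pos htpos
      have hsum : 0 < t + g y := by
        have := abs_lt.mp hgylt; rw [habs'] at this; linarith [this.1]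
      rw [abs_of_pos hsum, habs', hσ, habs']
      field_simp
      ring
  have : (fun y : X => (‖x + y‖ - ‖x‖ - (σ • f₀) y) / ‖y‖) =ᶠ[𝓝[≠] (0 : X)]
      (fun _ => (0 : ℝ)) := by
    filter_upwards [nhdsWithin_le_nhds (Metric.ball_mem_nhds (0 : X) hδpos)] with y hy
    rw [mem_ball_zero_iff] at hy
    rw [hEvZero y hy, zero_div]
  exact Tendsto.congr' this.symm tendsto_const_nhds
end
end

section
/- Let X be a real Banach space, let x₀ ∈ X be a unit vector, and suppose X = span{x₀} ⊕_∞ N for some closed subspace N ⊆ X. Let x₀* ∈ X* be the (unique) functional with x₀*(x₀) = 1 and x₀* = 0 on N. Then x₀* strongly exposes x₀: for every sequence (xₙ*) in the closed unit ball of X* with xₙ*(x₀) → 1, one has ‖xₙ* − x₀*‖ → 0. -/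
open Filter Topology Metric Set NormedSpace MeasureTheory

noncomputable section

theorem strongly_exposes_of_MSumDecomp_span
    {X : Type*} [NormedAddCommGroup X] [NormedSpace ℝ X] [CompleteSpace X]
    (x₀ : X) (hx₀ : ‖x₀‖ = 1) (N : Submodule ℝ X)
    (hdec : MSumDecomp (Submodule.span ℝ {x₀}) N)
    (x₀star : StrongDual ℝ X) (hval : x₀star x₀ = 1) (hker : ∀ n ∈ N, x₀star n = 0)
    (g : ℕ → StrongDual ℝ X) (hg : ∀ n, ‖g n‖ ≤ 1)
    (hconv : Tendsto (fun n => g n x₀) atTop (𝓝 1)) :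
    Tendsto (fun n => ‖g n - x₀star‖) atTop (𝓝 0) := by
  obtain ⟨_, _, _, htop, hnorm⟩ := hdec
  have hle1 : ∀ k, g k x₀ ≤ 1 := fun k => by
    calc g k x₀ ≤ |g k x₀| := le_abs_self _
    _ ≤ ‖g k‖ * ‖x₀‖ := (g k).le_opNorm x₀
    _ ≤ 1 := by rw [hx₀]; linarith [hg k]
  have hgn : ∀ k, ∀ n' ∈ N, g k n' ≤ ‖n'‖ * (1 - g k x₀) := by
    intro k n' hn'
    have h1 : g k (n' + ‖n'‖ • x₀) ≤ ‖n'‖ := by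
      calc g k (n' + ‖n'‖ • x₀) ≤ |g k (n' + ‖n'‖ • x₀)| := le_abs_self _
      _ ≤ ‖g k‖ * ‖n' + ‖n'‖ • x₀‖ := (g k).le_opNorm _
      _ ≤ ‖n' + ‖n'‖ • x₀‖ := by
          nlinarith [hg k, norm_nonneg (n' + ‖n'‖ • x₀)]
      _ = ‖n'‖ := by
          rw [add_comm, hnorm _ (Submodule.smul_mem _ _
            (Submodule.mem_span_singleton_self x₀)) _ hn', norm_smul, hx₀, mul_one,
            Real.norm_eq_abs, abs_of_nonneg (norm_nonneg _), max_self]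
    have h2 : g k (n' + ‖n'‖ • x₀) = g k n' + ‖n'‖ * g k x₀ := by
      simp [map_add, _root_.map_smul]
    nlinarith
  have key : ∀ k, ‖g k - x₀star‖ ≤ 2 * (1 - g k x₀) := by
    intro k
    apply ContinuousLinearMap.opNorm_le_bound
    · nlinarith [hle1 k]
    intro x
    have hx : x ∈ Submodule.span ℝ {x₀} ⊔ N := htop ▸ Submodule.mem_top
    obtain ⟨m, hm, n, hn, rfl⟩ := Submodule.mem_sup.mp hx
    obtain ⟨t, rfl⟩ := Submodule.mem_span_singleton.mp hm
    have hnormx : ‖t • x₀ + n‖ = max |t| ‖n‖ := by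
      rw [hnorm _ hm _ hn, norm_smul, hx₀, mul_one, Real.norm_eq_abs]
    have hup := hgn k n hn
    have hdn := hgn k (-n) (Submodule.neg_mem _ hn)
    rw [norm_neg, map_neg] at hdn
    have habs : |g k n| ≤ ‖n‖ * (1 - g k x₀) := abs_le.mpr ⟨by linarith, hup⟩
    have hval' : (g k - x₀star) (t • x₀ + n) = t * (g k x₀ - 1) + g k n := by
      simp only [ContinuousLinearMap.sub_apply, map_add, _root_.map_smul, hval, hker n hn,
        smul_eq_mul, mul_one, add_zero]; ring
    rw [Real.norm_eq_abs, hval', hnormx]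
    have h1 : |t * (g k x₀ - 1) + g k n| ≤ |t| * (1 - g k x₀) + ‖n‖ * (1 - g k x₀) := by
      calc |t * (g k x₀ - 1) + g k n| ≤ |t * (g k x₀ - 1)| + |g k n| := abs_add_le _ _
      _ ≤ |t| * (1 - g k x₀) + ‖n‖ * (1 - g k x₀) := by
          have habs2 : |t * (g k x₀ - 1)| = |t| * (1 - g k x₀) := by
            rw [abs_mul, abs_sub_comm,
              abs_of_nonneg (show (0:ℝ) ≤ 1 - g k x₀ by linarith [hle1 k])]
          linarith
    have h2 : |t| ≤ max |t| ‖n‖ := le_max_left _ _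
    have h3 : ‖n‖ ≤ max |t| ‖n‖ := le_max_right _ _
    nlinarith [hle1 k]
  have hlim : Tendsto (fun k => 2 * (1 - g k x₀)) atTop (𝓝 0) := by
    have h : Tendsto (fun k => (1:ℝ) - g k x₀) atTop (𝓝 (1 - 1)) :=
      tendsto_const_nhds.sub hconv
    have := h.const_mul (2 : ℝ)
    simpa using this
  exact squeeze_zero (fun k => norm_nonneg _) key hlim
end
end

section
/- Let K be a compact Hausdorff space with an isolated point k₀, and let f ∈ C(K) be a nonzero function such that |f(k)| < ‖f‖_∞ for every k ≠ k₀ (i.e., f attains its maximum modulus only at k₀). Then the supremum norm of C(K) is Fréchet differentiable at f. -/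
open Filter Topology Metric Set NormedSpace MeasureTheory

noncomputable section

theorem frechet_smooth_of_attains_only_at_isolated_point
    {K : Type*} [TopologicalSpace K] [CompactSpace K] [T2Space K]
    (k₀ : K) (hk₀ : IsOpen ({k₀} : Set K))
    (f : C(K, ℝ)) (hf : f ≠ 0)
    (hmax : ∀ k : K, k ≠ k₀ → |f k| < ‖f‖) :
    FrechetSmoothPoint C(K, ℝ) f := by
  classical
  have hc : 0 < ‖f‖ := norm_pos_iff.mpr hf
  -- the norm of a continuous function on compact K is attained
  have hattain : ∀ g : C(K, ℝ), ∃ k : K, ‖g‖ = |g k| := by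
    intro g
    obtain ⟨k, -, hk⟩ := isCompact_univ.exists_isMaxOn ⟨k₀, Set.mem_univ k₀⟩
      ((continuous_abs.comp g.continuous).continuousOn)
    refine ⟨k, le_antisymm ?_ ?_⟩
    · exact (ContinuousMap.norm_le g (abs_nonneg _)).mpr fun x => by
        simpa [Real.norm_eq_abs] using hk (Set.mem_univ x)
    · simpa [Real.norm_eq_abs] using g.norm_coe_le_norm k
  have hfk₀ : |f k₀| = ‖f‖ := by
    obtain ⟨k, hk⟩ := hattain f
    by_cases hkk : k = k₀
    · rw [← hkk]; exact hk.symm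
    · exact absurd (hk ▸ hmax k hkk) (lt_irrefl _)
  set s : ℝ := if 0 ≤ f k₀ then 1 else -1 with hs_def
  have hs_abs : ∀ z : ℝ, |s * z| = |z| := by
    intro z
    rcases le_or_gt 0 (f k₀) with h | h
    · simp [hs_def, if_pos h]
    · simp [hs_def, if_neg (not_le.mpr h), abs_mul]
  have hsf : s * f k₀ = ‖f‖ := by
    rcases le_or_gt 0 (f k₀) with h | h
    · simp only [hs_def, if_pos h, one_mul]; rw [← hfk₀, abs_of_nonneg h]
    · simp only [hs_def, if_neg (not_le.mpr h), neg_one_mul]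
      rw [← hfk₀, abs_of_neg h]
  set S : Set ℝ := (fun k => |f k|) '' ({k₀}ᶜ : Set K) with hS_def
  have hScomp : IsCompact S :=
    (hk₀.isClosed_compl.isCompact).image (continuous_abs.comp f.continuous)
  set m : ℝ := sSup S with hm_def
  have hm : m < ‖f‖ := by
    rcases S.eq_empty_or_nonempty with hSe | hSne
    · rw [hm_def, hSe, Real.sSup_empty]; exact hc
    · obtain ⟨k, hk, hkm⟩ := hScomp.sSup_mem hSne
      rw [hm_def, ← hkm]
      exact hmax k hk
  have hbound : ∀ k : K, k ≠ k₀ → |f k| ≤ m :=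
    fun k hk => le_csSup hScomp.bddAbove ⟨k, hk, rfl⟩
  set ε : ℝ := min ((‖f‖ - m) / 2) (‖f‖ / 2) with hε_def
  have hε : 0 < ε := lt_min (by linarith) (by linarith)
  have key : ∀ y : C(K, ℝ), ‖y‖ < ε → ‖f + y‖ = ‖f‖ + s * y k₀ := by
    intro y hy
    have hy1 : ‖y‖ < (‖f‖ - m) / 2 := lt_of_lt_of_le hy (min_le_left _ _)
    have hy2 : ‖y‖ < ‖f‖ / 2 := lt_of_lt_of_le hy (min_le_right _ _)
    have hyk₀ : |y k₀| ≤ ‖y‖ := by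
      simpa [Real.norm_eq_abs] using y.norm_coe_le_norm k₀
    have hsy : -‖y‖ ≤ s * y k₀ := by
      have := neg_abs_le (s * y k₀)
      rw [hs_abs] at this
      linarith
    have hpos : 0 < ‖f‖ + s * y k₀ := by linarith
    have hval : |(f + y) k₀| = ‖f‖ + s * y k₀ := by
      rw [← hs_abs ((f + y) k₀)]
      rw [abs_of_pos (by rw [ContinuousMap.add_apply, mul_add, hsf]; exact hpos)]
      rw [ContinuousMap.add_apply, mul_add, hsf]
    have hle : ∀ k : K, |(f + y) k| ≤ ‖f‖ + s * y k₀ := by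
      intro k
      by_cases hkk : k = k₀
      · rw [hkk, hval]
      · have h1 : |(f + y) k| ≤ |f k| + |y k| := by
          rw [ContinuousMap.add_apply]; exact abs_add_le _ _
        have h2 : |y k| ≤ ‖y‖ := by
          simpa [Real.norm_eq_abs] using y.norm_coe_le_norm k
        have := hbound k hkk
        linarith
    refine le_antisymm ?_ ?_
    · exact (ContinuousMap.norm_le _ hpos.le).mpr fun k => by
        simpa [Real.norm_eq_abs] using hle k
    · rw [← hval]
      simpa [Real.norm_eq_abs] using (f + y).norm_coe_le_norm k₀
  refine ⟨s • ContinuousMap.evalCLM ℝ k₀, ?_⟩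
  have hmem : Metric.ball (0 : C(K, ℝ)) ε ∈ 𝓝[≠] (0 : C(K, ℝ)) :=
    nhdsWithin_le_nhds (Metric.ball_mem_nhds _ hε)
  have hev : (fun y : C(K, ℝ) => (‖f + y‖ - ‖f‖ - (s • ContinuousMap.evalCLM ℝ k₀) y) / ‖y‖)
      =ᶠ[𝓝[≠] (0 : C(K, ℝ))] (fun _ : C(K, ℝ) => (0 : ℝ)) := by
    filter_upwards [hmem] with y hy
    have hylt : ‖y‖ < ε := by simpa [Metric.mem_ball, dist_zero_right] using hy
    have : (s • ContinuousMap.evalCLM ℝ k₀) y = s * y k₀ := by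
      simp [ContinuousMap.evalCLM]
    rw [key y hylt, this]
    simp
  exact tendsto_const_nhds.congr' hev.symm
end
end

section
/- Let X be a real Banach space such that for every extreme point x* of the closed unit ball of X*, the one-dimensional subspace span{x*} is an L-summand of X*, i.e., X* = span{x*} ⊕₁ N for some closed subspace N. Then every very smooth point of X is a Fréchet smooth point of X. -/
open Filter Topology Metric Set NormedSpace MeasureTheory

noncomputable section

noncomputable instance subStrongDualNormed {E : Type*} [NormedAddCommGroup E] [NormedSpace ℝ E]
    (N : Submodule ℝ (StrongDual ℝ E)) : NormedAddCommGroup N := N.normedAddCommGroup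

noncomputable instance subStrongDualNormedSpace {E : Type*} [NormedAddCommGroup E] [NormedSpace ℝ E]
    (N : Submodule ℝ (StrongDual ℝ E)) : NormedSpace ℝ N := N.normedSpace

noncomputable instance subStrongDualNormed₂ {E : Type*} [NormedAddCommGroup E] [NormedSpace ℝ E]
    (N : Submodule ℝ (StrongDual ℝ (StrongDual ℝ E))) : NormedAddCommGroup N :=
  @Submodule.normedAddCommGroup ℝ (StrongDual ℝ (StrongDual ℝ E)) _ _ _ N

noncomputable instance subStrongDualNormedSpace₂ {E : Type*} [NormedAddCommGroup E] [NormedSpace ℝ E]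
    (N : Submodule ℝ (StrongDual ℝ (StrongDual ℝ E))) : NormedSpace ℝ N :=
  @Submodule.normedSpace ℝ ℝ _ _ _ (StrongDual ℝ (StrongDual ℝ E)) _ _ _ _ N

section AuxLemmas

variable {E : Type*} [NormedAddCommGroup E] [NormedSpace ℝ E]

lemma exists_coeff_functional (f : E) (hf1 : ‖f‖ = 1) (N : Submodule ℝ E)
    (hinf : Submodule.span ℝ {f} ⊓ N = ⊥) (hsup : Submodule.span ℝ {f} ⊔ N = ⊤)
    (hadd : ∀ m ∈ Submodule.span ℝ {f}, ∀ n ∈ N, ‖m + n‖ = ‖m‖ + ‖n‖) :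
    ∃ G : E →L[ℝ] ℝ, G f = 1 ∧ (∀ n ∈ N, G n = 0) ∧
      (∀ g : E, g - G g • f ∈ N) ∧ (∀ g : E, ‖g‖ = |G g| + ‖g - G g • f‖) := by
  have hf0 : f ≠ 0 := fun h => by simp [h] at hf1
  have hcompl : IsCompl (Submodule.span ℝ {f}) N :=
    ⟨disjoint_iff.mpr hinf, codisjoint_iff.mpr hsup⟩
  set proj := Submodule.projectionOnto _ N hcompl with hproj
  set Glin : E →ₗ[ℝ] ℝ := (LinearEquiv.coord ℝ E f hf0).toLinearMap.comp proj with hGlin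
  have hrepr : ∀ g : E, (proj g : E) = Glin g • f := fun g =>
    (LinearEquiv.coord_apply_smul ℝ E f hf0 (proj g)).symm
  have hmemN : ∀ g : E, g - Glin g • f ∈ N := by
    intro g
    rw [← hrepr]
    have h0 : proj (g - (proj g : E)) = 0 := by
      rw [map_sub, hproj, Submodule.projectionOnto_apply_left hcompl, sub_self]
    exact (Submodule.projectionOnto_apply_eq_zero_iff hcompl).mp h0
  have hnorm : ∀ g : E, ‖g‖ = |Glin g| + ‖g - Glin g • f‖ := by
    intro g
    have h1 : ‖Glin g • f + (g - Glin g • f)‖ = ‖Glin g • f‖ + ‖g - Glin g • f‖ :=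
      hadd _ (Submodule.smul_mem _ _ (Submodule.mem_span_singleton_self f)) _ (hmemN g)
    have h2 : Glin g • f + (g - Glin g • f) = g := by abel
    rw [h2] at h1
    simpa [norm_smul, hf1, Real.norm_eq_abs] using h1
  have hbound : ∀ g : E, ‖Glin g‖ ≤ 1 * ‖g‖ := fun g => by
    rw [Real.norm_eq_abs, one_mul, hnorm g]
    linarith [norm_nonneg (g - Glin g • f)]
  refine ⟨Glin.mkContinuous 1 hbound, ?_, ?_, ?_, ?_⟩
  · have hpf : proj f = ⟨f, Submodule.mem_span_singleton_self f⟩ :=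
      Submodule.projectionOnto_apply_left hcompl ⟨f, Submodule.mem_span_singleton_self f⟩
    simp only [LinearMap.mkContinuous_apply, hGlin, LinearMap.comp_apply, hpf,
      LinearEquiv.coe_coe]
    exact LinearEquiv.coord_self ℝ E f hf0
  · intro n hn
    have hpn : proj n = 0 := Submodule.projectionOnto_apply_of_mem_right hcompl hn
    simp [hGlin, hpn]
  · intro g
    simpa using hmemN g
  · intro g
    simpa using hnorm g


lemma norming_is_extreme {X : Type*} [NormedAddCommGroup X] [NormedSpace ℝ X]
    (x : X) (hx0 : x ≠ 0) (f : StrongDual ℝ X) (hf1 : ‖f‖ = 1) (hfx : f x = ‖x‖)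
    (huniq : ∀ g : StrongDual ℝ X, (‖g‖ = 1 ∧ g x = ‖x‖) → g = f) :
    f ∈ Set.extremePoints ℝ (closedBall (0 : StrongDual ℝ X) 1) := by
  have hxpos : (0:ℝ) < ‖x‖ := norm_pos_iff.mpr hx0
  have hb1 : ∀ k : StrongDual ℝ X, ‖k‖ ≤ 1 → k x ≤ ‖x‖ := by
    intro k hk
    have h := k.le_opNorm x
    rw [Real.norm_eq_abs] at h
    nlinarith [le_abs_self (k x), norm_nonneg x]
  have hnorming : ∀ g : StrongDual ℝ X, ‖g‖ ≤ 1 → g x = ‖x‖ → g = f := by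
    intro g hg1 hgx
    refine huniq g ⟨le_antisymm hg1 ?_, hgx⟩
    have h1 := g.le_opNorm x
    rw [Real.norm_eq_abs, hgx, abs_of_nonneg hxpos.le] at h1
    nlinarith
  constructor
  · simpa [mem_closedBall_zero_iff] using hf1.le
  · rintro g hg h hh ⟨a, b, ha, hb, hab, hsum⟩
    have hg1 : ‖g‖ ≤ 1 := by simpa [mem_closedBall_zero_iff] using hg
    have hh1 : ‖h‖ ≤ 1 := by simpa [mem_closedBall_zero_iff] using hh
    have hgx : g x ≤ ‖x‖ := hb1 g hg1
    have hhx : h x ≤ ‖x‖ := hb1 h hh1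
    have hsumx : a * g x + b * h x = ‖x‖ := by
      have := congrArg (fun k : StrongDual ℝ X => k x) hsum
      simpa [hfx] using this
    have hgx' : g x = ‖x‖ := by nlinarith
    have hhx' : h x = ‖x‖ := by nlinarith
    exact hnorming g hg1 hgx'

lemma restrict_norm_lt {X : Type*} [NormedAddCommGroup X] [NormedSpace ℝ X]
    (x : X) (hx0 : x ≠ 0) (f : StrongDual ℝ X) (hf1 : ‖f‖ = 1) (hfx : f x = ‖x‖)
    (N : Submodule ℝ (StrongDual ℝ X))
    (G : StrongDual ℝ (StrongDual ℝ X)) (hGf : G f = 1) (hGN : ∀ n ∈ N, G n = 0)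
    (hxx : SmoothPoint (StrongDual ℝ (StrongDual ℝ X)) (inclusionInDoubleDual ℝ X x)) :
    ‖(inclusionInDoubleDual ℝ X x).comp N.subtypeL‖ < ‖x‖ := by
  have hxpos : (0:ℝ) < ‖x‖ := norm_pos_iff.mpr hx0
  set xhat := inclusionInDoubleDual ℝ X x with hxhatdef
  set T := xhat.comp N.subtypeL with hTdef
  have hxhatnorm : ‖xhat‖ = ‖x‖ := (inclusionInDoubleDualLi ℝ (E := X)).norm_map x
  have hrle : ‖T‖ ≤ ‖x‖ := by
    refine ContinuousLinearMap.opNorm_le_bound _ (norm_nonneg x) (fun n => ?_)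
    calc ‖T n‖ = ‖(n : StrongDual ℝ X) x‖ := rfl
      _ ≤ ‖(n : StrongDual ℝ X)‖ * ‖x‖ := (n : StrongDual ℝ X).le_opNorm x
      _ = ‖x‖ * ‖n‖ := by rw [mul_comm]; rfl
  rcases lt_or_ge ‖T‖ ‖x‖ with h | hcon
  · exact h
  exfalso
  -- pick n₀ ∈ N with n₀ x ≠ 0
  obtain ⟨n₀, hn₀1, hn₀2⟩ := T.exists_lt_apply_of_lt_opNorm
    (show (0:ℝ) < ‖T‖ by linarith)
  have hn₀x : (n₀ : StrongDual ℝ X) x ≠ 0 := by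
    intro h
    rw [show ‖T n₀‖ = ‖(n₀ : StrongDual ℝ X) x‖ from rfl, h, norm_zero] at hn₀2
    exact lt_irrefl _ hn₀2
  -- the functional H on the bidual
  set H : StrongDual ℝ (StrongDual ℝ (StrongDual ℝ X)) :=
    (‖x‖ / (n₀ : StrongDual ℝ X) x) • inclusionInDoubleDual ℝ (StrongDual ℝ X) (n₀ : StrongDual ℝ X) with hHdef
  have hHxhat : H xhat = ‖x‖ := by
    rw [hHdef]
    simp only [ContinuousLinearMap.smul_apply, dual_def, hxhatdef]
    rw [smul_eq_mul, div_mul_cancel₀ _ hn₀x]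
  have hHG : H G = 0 := by
    rw [hHdef]
    simp only [ContinuousLinearMap.smul_apply, dual_def]
    rw [hGN _ n₀.2, smul_zero]
  -- the subspace W
  set W : Submodule ℝ (StrongDual ℝ (StrongDual ℝ X)) := Submodule.span ℝ {xhat, G} with hWdef
  have hxhatW : xhat ∈ W := Submodule.subset_span (by simp)
  have hGW : G ∈ W := Submodule.subset_span (by simp)
  -- norm bound for H on W
  have hHW : ∀ w : StrongDual ℝ (StrongDual ℝ X), w ∈ W → ‖H w‖ ≤ ‖w‖ := by
    intro w hw
    obtain ⟨a, b, hab⟩ := Submodule.mem_span_pair.mp hw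
    have hHw : H w = a * ‖x‖ := by
      rw [← hab]
      rw [map_add, H.map_smul, H.map_smul, hHxhat, hHG, smul_eq_mul, smul_eq_mul, mul_zero,
        add_zero]
    rw [hHw, Real.norm_eq_abs, abs_mul, abs_of_nonneg hxpos.le]
    -- show |a| * ‖x‖ ≤ ‖w‖
    refine le_of_forall_sub_le fun ε hε => ?_
    obtain ⟨n, hn1, hn2⟩ := T.exists_lt_apply_of_lt_opNorm
      (show ‖x‖ - ε / (|a| + 1) < ‖T‖ by
        have : (0:ℝ) < ε / (|a| + 1) := by positivity
        linarith)
    have hwn : w ((n : StrongDual ℝ X)) = a * ((n : StrongDual ℝ X) x) := by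
      rw [← hab]
      simp only [ContinuousLinearMap.add_apply, ContinuousLinearMap.smul_apply,
        hxhatdef, dual_def, hGN _ n.2, smul_eq_mul, mul_zero, add_zero]
    have h1 : ‖w ((n : StrongDual ℝ X))‖ ≤ ‖w‖ * ‖(n : StrongDual ℝ X)‖ := w.le_opNorm _
    have hn1' : ‖(n : StrongDual ℝ X)‖ < 1 := hn1
    have h2 : ‖w ((n : StrongDual ℝ X))‖ = |a| * ‖(n : StrongDual ℝ X) x‖ := by
      rw [hwn, Real.norm_eq_abs, Real.norm_eq_abs, abs_mul]
    have h3 : ‖x‖ - ε / (|a| + 1) < ‖T n‖ := hn2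
    have h4 : ‖T n‖ = ‖(n : StrongDual ℝ X) x‖ := rfl
    have h5 : |a| * (‖x‖ - ε / (|a| + 1)) ≤ |a| * ‖(n : StrongDual ℝ X) x‖ :=
      mul_le_mul_of_nonneg_left (by rw [← h4]; exact h3.le) (abs_nonneg a)
    have h6 : |a| * (ε / (|a| + 1)) ≤ ε := by
      have hpos : (0:ℝ) < |a| + 1 := by positivity
      calc |a| * (ε / (|a| + 1)) ≤ (|a| + 1) * (ε / (|a| + 1)) :=
            mul_le_mul_of_nonneg_right (by linarith) (by positivity)
        _ = ε := by field_simp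
    have e1 : |a| * (‖x‖ - ε / (|a| + 1)) = |a| * ‖x‖ - |a| * (ε / (|a| + 1)) := by ring
    have e2 : ‖w‖ * ‖(n : StrongDual ℝ X)‖ ≤ ‖w‖ :=
      mul_le_of_le_one_right (norm_nonneg w) hn1'.le
    linarith [h5, h1, h6, e1, e2, h2.le, h2.ge]
  -- restrict H to W and extend by Hahn-Banach
  set F₀ : W →L[ℝ] ℝ := H.comp W.subtypeL with hF₀def
  obtain ⟨F, hFext, hFnorm⟩ := @exists_extension_norm_eq ℝ _ _ (StrongDual ℝ (StrongDual ℝ X)) _ _ W F₀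
  have hF₀le : ‖F₀‖ ≤ 1 := by
    refine ContinuousLinearMap.opNorm_le_bound _ zero_le_one (fun w => ?_)
    rw [one_mul]
    exact hHW _ w.2
  have hFxhat : F xhat = ‖x‖ := by
    have := hFext ⟨xhat, hxhatW⟩
    rw [this]
    show H xhat = ‖x‖
    exact hHxhat
  have hFG : F G = 0 := by
    have := hFext ⟨G, hGW⟩
    rw [this]
    show H G = 0
    exact hHG
  have hFle : ‖F‖ ≤ 1 := hFnorm.le.trans hF₀le
  have hFn : ‖F‖ = 1 := by
    refine le_antisymm hFle ?_
    have h := F.le_opNorm xhat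
    rw [hFxhat, hxhatnorm, Real.norm_eq_abs, abs_of_nonneg hxpos.le] at h
    have h2 : 1 * ‖x‖ ≤ ‖F‖ * ‖x‖ := by linarith
    exact le_of_mul_le_mul_right h2 hxpos
  set If := inclusionInDoubleDual ℝ (StrongDual ℝ X) f with hIfdef
  have hIfn : ‖If‖ = 1 := by
    have : ‖If‖ = ‖f‖ := (inclusionInDoubleDualLi ℝ (E := StrongDual ℝ X)).norm_map f
    rw [this, hf1]
  have hIfx : If xhat = ‖xhat‖ := by
    rw [hIfdef, dual_def, hxhatdef, dual_def, hxhatnorm, hfx]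
  obtain ⟨hne, F', hF'p, hF'u⟩ := hxx
  have h1 : F = F' := hF'u F ⟨hFn, by rw [hFxhat, hxhatnorm]⟩
  have h2 : If = F' := hF'u If ⟨hIfn, hIfx⟩
  have hIfG : If G = 1 := by rw [hIfdef, dual_def]; exact hGf
  rw [h1, ← h2, hIfG] at hFG
  exact one_ne_zero hFG

end AuxLemmas

theorem frechet_smooth_of_very_smooth_of_extreme_L_summands
    {X : Type*} [NormedAddCommGroup X] [NormedSpace ℝ X] [CompleteSpace X]
    (hL : ∀ f ∈ Set.extremePoints ℝ (closedBall (0 : StrongDual ℝ X) 1),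
      ∃ N : Submodule ℝ (StrongDual ℝ X), LSumDecomp (Submodule.span ℝ {f}) N)
    (x : X) (hx : VerySmoothPoint X x) :
    FrechetSmoothPoint X x := by
  obtain ⟨⟨hx0, f, ⟨hf1, hfx⟩, hfuniq⟩, hxx⟩ := hx
  have hxpos : (0:ℝ) < ‖x‖ := norm_pos_iff.mpr hx0
  have hfe : f ∈ Set.extremePoints ℝ (closedBall (0 : StrongDual ℝ X) 1) :=
    norming_is_extreme x hx0 f hf1 hfx hfuniq
  obtain ⟨N, hLS⟩ := hL f hfe
  obtain ⟨-, -, hinf, hsup, hadd⟩ := hLS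
  obtain ⟨G, hGf, hGN, hGmem, hGnorm⟩ := exists_coeff_functional f hf1 N hinf hsup hadd
  have hex : ∃ r : ℝ, 0 ≤ r ∧ r < ‖x‖ ∧ ∀ m ∈ N, |m x| ≤ r * ‖m‖ := by
    refine ⟨‖(inclusionInDoubleDual ℝ X x).comp N.subtypeL‖, ContinuousLinearMap.opNorm_nonneg _,
      restrict_norm_lt x hx0 f hf1 hfx N G hGf hGN hxx, ?_⟩
    intro m hm
    have h := ((inclusionInDoubleDual ℝ X x).comp N.subtypeL).le_opNorm ⟨m, hm⟩
    have h2 : ‖m x‖ ≤ ‖(inclusionInDoubleDual ℝ X x).comp N.subtypeL‖ * ‖m‖ := h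
    rwa [Real.norm_eq_abs] at h2
  obtain ⟨r, hr0, hr, hrbound⟩ := hex
  have hxr : 0 < ‖x‖ - r := by linarith
  set K : ℝ := 2 / ‖x‖ + 4 / (‖x‖ - r) with hKdef
  clear_value K
  have key : ∀ y : X, y ≠ 0 → ‖y‖ < ‖x‖ / 2 →
      |(‖x + y‖ - ‖x‖ - f y) / ‖y‖| ≤ K * ‖y‖ := by
    intro y hy0 hy
    have hypos : 0 < ‖y‖ := norm_pos_iff.mpr hy0
    have hxy0 : x + y ≠ 0 := by
      intro h
      have h1 : y = -x := eq_neg_of_add_eq_zero_right h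
      rw [h1, norm_neg] at hy
      linarith
    obtain ⟨g, hg1, hgxy'⟩ := exists_dual_vector ℝ (x + y) (norm_ne_zero_iff.mpr hxy0)
    have hgxy : g (x + y) = ‖x + y‖ := by simpa using hgxy'
    set t := G g with htdef
    set n := g - t • f with hndef
    have hnN : n ∈ N := hGmem g
    have hdecomp : |t| + ‖n‖ = 1 := by rw [← hg1]; exact (hGnorm g).symm
    have hnx : n x ≤ r * ‖n‖ :=
      (le_abs_self _).trans (hrbound n hnN)
    have hnx2 : n x ≤ ‖n‖ * ‖x‖ := by
      have h := n.le_opNorm x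
      rw [Real.norm_eq_abs] at h
      exact (le_abs_self _).trans h
    have hgy : |g y| ≤ ‖y‖ := by
      have h := g.le_opNorm y
      rwa [hg1, one_mul, Real.norm_eq_abs] at h
    have hgx : ‖x‖ - 2 * ‖y‖ ≤ g x := by
      have h1 : g (x + y) = g x + g y := map_add g x y
      have h2 : ‖x‖ ≤ ‖x + y‖ + ‖y‖ := by
        calc ‖x‖ = ‖x + y - y‖ := by rw [add_sub_cancel_right]
          _ ≤ ‖x + y‖ + ‖y‖ := norm_sub_le _ _
      have h3 := neg_abs_le (g y)
      rw [hgxy] at h1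
      linarith [le_abs_self (g y)]
    have hgxval : g x = t * ‖x‖ + n x := by
      have h1 : g = t • f + n := by rw [hndef]; abel
      have h2 : g x = t * f x + n x := by rw [h1]; simp
      rw [h2, hfx]
    clear_value t n
    have ht1 : t ≤ 1 - ‖n‖ := by
      have := le_abs_self t
      linarith
    have hnb : ‖n‖ * (‖x‖ - r) ≤ 2 * ‖y‖ := by
      have hm := mul_le_mul_of_nonneg_right ht1 hxpos.le
      linarith [hgx, hgxval.le, hgxval.ge, hnx]
    have hnb' : ‖n‖ ≤ 2 * ‖y‖ / (‖x‖ - r) := (le_div_iff₀ hxr).mpr hnb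
    have h1t : (1 - t) * ‖x‖ ≤ 2 * ‖y‖ + ‖n‖ * ‖x‖ := by linarith [hgx, hgxval.le, hgxval.ge, hnx2]
    have hgf : ‖g - f‖ ≤ K * ‖y‖ := by
      have hrepr : g - f = (t - 1) • f + n := by
        rw [hndef, sub_smul (M := StrongDual ℝ X), one_smul]; abel
      have hmem : (t - 1) • f ∈ Submodule.span ℝ {f} :=
        Submodule.smul_mem _ _ (Submodule.mem_span_singleton_self f)
      rw [hrepr, hadd _ hmem _ hnN, norm_smul, hf1, mul_one, Real.norm_eq_abs]
      have habs : |t - 1| = 1 - t := by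
        rw [abs_sub_comm]
        exact abs_of_nonneg (by linarith [abs_nonneg t, norm_nonneg n])
      rw [habs]
      have e1 : K * ‖y‖ = 2 * ‖y‖ / ‖x‖ + 4 * ‖y‖ / (‖x‖ - r) := by rw [hKdef]; ring
      have e2 : 1 - t - ‖n‖ ≤ 2 * ‖y‖ / ‖x‖ := by
        rw [le_div_iff₀ hxpos]
        linarith [h1t]
      have e3 : 4 * ‖y‖ / (‖x‖ - r) = 2 * (2 * ‖y‖ / (‖x‖ - r)) := by ring
      linarith [hnb', e1.le, e1.ge]
    have hupper : ‖x + y‖ - ‖x‖ - f y ≤ K * ‖y‖ * ‖y‖ := by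
      have h1 : ‖x + y‖ = g x + g y := by rw [← hgxy, map_add]
      have h2 : g x ≤ ‖x‖ := by
        have h := g.le_opNorm x
        rw [hg1, one_mul, Real.norm_eq_abs] at h
        linarith [le_abs_self (g x)]
      have h3 : g y - f y ≤ ‖g - f‖ * ‖y‖ := by
        have h := (g - f).le_opNorm y
        rw [Real.norm_eq_abs] at h
        have h4 : (g - f) y = g y - f y := by simp
        linarith [le_abs_self ((g - f) y), h4.ge, h4.le]
      have h5 : ‖g - f‖ * ‖y‖ ≤ K * ‖y‖ * ‖y‖ :=
        mul_le_mul_of_nonneg_right hgf (norm_nonneg y)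
      linarith
    have hlower : 0 ≤ ‖x + y‖ - ‖x‖ - f y := by
      have h1 : f (x + y) = f x + f y := map_add f x y
      have h2 : f (x + y) ≤ ‖x + y‖ := by
        have h := f.le_opNorm (x + y)
        rw [hf1, one_mul, Real.norm_eq_abs] at h
        linarith [le_abs_self (f (x + y))]
      linarith [hfx.ge, hfx.le]
    rw [abs_div, abs_of_nonneg hlower, abs_of_nonneg (norm_nonneg y), div_le_iff₀ hypos]
    exact hupper
  refine ⟨f, ?_⟩
  have hev : ∀ᶠ y in 𝓝[≠] (0 : X), ‖(‖x + y‖ - ‖x‖ - f y) / ‖y‖‖ ≤ K * ‖y‖ := by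
    have h1 : ∀ᶠ y in 𝓝 (0 : X), ‖y‖ < ‖x‖ / 2 := by
      filter_upwards [Metric.ball_mem_nhds (0 : X) (by positivity : (0:ℝ) < ‖x‖ / 2)] with y hy
      simpa [mem_ball, dist_zero_right] using hy
    filter_upwards [eventually_nhdsWithin_of_eventually_nhds h1, self_mem_nhdsWithin]
      with y hy1 hy2
    rw [Real.norm_eq_abs]
    exact key y hy2 hy1
  have hten : Tendsto (fun y : X => K * ‖y‖) (𝓝[≠] (0 : X)) (𝓝 0) := by
    have h1 : Tendsto (fun y : X => K * ‖y‖) (𝓝 0) (𝓝 (K * ‖(0 : X)‖)) :=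
      (continuous_const.mul continuous_norm).tendsto 0
    simpa using h1.mono_left nhdsWithin_le_nhds
  exact squeeze_zero_norm' hev hten
end
end

section
/- Let X be a real Banach space such that for every extreme point x* of the closed unit ball of X*, span{x*} is an L-summand of X*. Then for any two extreme points x₁*, x₂* of the closed unit ball of X* with x₁* ≠ x₂* and x₁* ≠ −x₂*, one has ‖x₁* − x₂*‖ = 2; in particular the set of extreme points of the closed unit ball of X* is norm-discrete. -/
open Filter Topology Metric Set NormedSpace MeasureTheory

noncomputable section

private lemma ext_norm_one' {Y : Type*} [NormedAddCommGroup Y] [NormedSpace ℝ Y] {f : Y}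
    (hf : f ∈ Set.extremePoints ℝ (closedBall (0 : Y) 1)) (h0 : f ≠ 0) : ‖f‖ = 1 := by
  obtain ⟨hmem, hext⟩ := hf
  rw [mem_closedBall, dist_zero_right] at hmem
  by_contra hne
  have hlt : ‖f‖ < 1 := lt_of_le_of_ne hmem hne
  have hfpos : (0:ℝ) < ‖f‖ := norm_pos_iff.2 h0
  set t : ℝ := (1 - ‖f‖) / ‖f‖ with ht
  have htpos : 0 < t := div_pos (by linarith) hfpos
  have h1 : ‖(1 + t) • f‖ ≤ 1 := by
    rw [norm_smul, Real.norm_eq_abs, abs_of_pos (by linarith), ht]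
    field_simp
    linarith
  have h2 : ‖(1 - t) • f‖ ≤ 1 := by
    rw [norm_smul, Real.norm_eq_abs]
    calc |1 - t| * ‖f‖ ≤ (1 + t) * ‖f‖ := by
          apply mul_le_mul_of_nonneg_right _ hfpos.le
          cases abs_cases (1 - t) with
          | inl h => linarith [h.1]
          | inr h => linarith [h.1]
      _ ≤ 1 := h1.trans_eq' (by rw [norm_smul, Real.norm_eq_abs, abs_of_pos (by linarith)])
  have hseg : f ∈ openSegment ℝ ((1 + t) • f) ((1 - t) • f) := by
    refine ⟨1/2, 1/2, by norm_num, by norm_num, by norm_num, ?_⟩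
    rw [smul_smul, smul_smul, ← add_smul]; ring_nf; module
  have heq := (hext (by simpa [dist_zero_right] using h1)
    (by simpa [dist_zero_right] using h2) hseg)
  have : t • f = 0 := by
    calc t • f = (1 + t) • f - f := by module
      _ = 0 := by rw [heq]; abel
  rcases smul_eq_zero.1 this with h | h
  · exact htpos.ne' h
  · exact h0 h

private lemma ext_zero' {Y : Type*} [NormedAddCommGroup Y] [NormedSpace ℝ Y]
    (hf : (0:Y) ∈ Set.extremePoints ℝ (closedBall (0 : Y) 1)) :
    ∀ g ∈ closedBall (0:Y) 1, g = 0 := by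
  intro g hg
  by_contra hne
  have hng : -g ∈ closedBall (0:Y) 1 := by
    simpa [dist_zero_right] using mem_closedBall_zero_iff.1 hg
  have hseg : (0:Y) ∈ openSegment ℝ g (-g) :=
    ⟨1/2, 1/2, by norm_num, by norm_num, by norm_num, by module⟩
  exact hne (hf.2 hg hng hseg)

theorem extreme_points_norm_discrete_of_L_summands
    {X : Type*} [NormedAddCommGroup X] [NormedSpace ℝ X] [CompleteSpace X]
    (hL : ∀ f ∈ Set.extremePoints ℝ (closedBall (0 : StrongDual ℝ X) 1),
      ∃ N : Submodule ℝ (StrongDual ℝ X), LSumDecomp (Submodule.span ℝ {f}) N) :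
    (∀ f ∈ Set.extremePoints ℝ (closedBall (0 : StrongDual ℝ X) 1),
      ∀ g ∈ Set.extremePoints ℝ (closedBall (0 : StrongDual ℝ X) 1),
        f ≠ g → f ≠ -g → ‖f - g‖ = 2) ∧
    ∀ f ∈ Set.extremePoints ℝ (closedBall (0 : StrongDual ℝ X) 1),
      ∃ ε > (0 : ℝ), ∀ g ∈ Set.extremePoints ℝ (closedBall (0 : StrongDual ℝ X) 1),
        g ≠ f → ε ≤ ‖f - g‖ := by
  -- main claim
  have main : ∀ f ∈ Set.extremePoints ℝ (closedBall (0 : StrongDual ℝ X) 1),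
      ∀ g ∈ Set.extremePoints ℝ (closedBall (0 : StrongDual ℝ X) 1),
        f ≠ g → f ≠ -g → ‖f - g‖ = 2 := by
    intro f hf g hg hfg hfng
    have hf0 : f ≠ 0 := by
      rintro rfl
      exact hfg (ext_zero' hf g hg.1).symm
    have hg0 : g ≠ 0 := by
      rintro rfl
      exact hfg (ext_zero' hg f hf.1)
    have hnf : ‖f‖ = 1 := ext_norm_one' hf hf0
    have hng : ‖g‖ = 1 := ext_norm_one' hg hg0
    obtain ⟨N, hMcl, hNcl, hinf, hsup, hnorm⟩ := hL f hf
    set M := Submodule.span ℝ ({f} : Set (StrongDual ℝ X)) with hM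
    have hgM : g ∉ M := by
      intro hmem
      obtain ⟨c, rfl⟩ := Submodule.mem_span_singleton.1 hmem
      rw [norm_smul, Real.norm_eq_abs, hnf, mul_one] at hng
      rcases abs_eq (by norm_num : (0:ℝ) ≤ 1) |>.1 hng with rfl | rfl
      · exact hfg (by simp)
      · exact hfng (by simp)
    have hgsup : g ∈ M ⊔ N := by rw [hsup]; trivial
    obtain ⟨m, hm, n, hn, hgdef⟩ := Submodule.mem_sup.1 hgsup
    have hsum : ‖m‖ + ‖n‖ = 1 := by rw [← hnorm m hm n hn, hgdef, hng]
    have hn0 : n ≠ 0 := by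
      rintro rfl
      rw [add_zero] at hgdef
      exact hgM (hgdef ▸ hm)
    have hm0 : m = 0 := by
      by_contra hm0
      have hmpos : (0:ℝ) < ‖m‖ := norm_pos_iff.2 hm0
      have hnpos : (0:ℝ) < ‖n‖ := norm_pos_iff.2 hn0
      set x₁ := ‖m‖⁻¹ • m with hx₁
      set x₂ := ‖n‖⁻¹ • n with hx₂
      have hnx₁ : ‖x₁‖ = 1 := by
        rw [hx₁, norm_smul, Real.norm_eq_abs, abs_of_pos (inv_pos.2 hmpos),
          inv_mul_cancel₀ hmpos.ne']
      have hnx₂ : ‖x₂‖ = 1 := by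
        rw [hx₂, norm_smul, Real.norm_eq_abs, abs_of_pos (inv_pos.2 hnpos),
          inv_mul_cancel₀ hnpos.ne']
      have hseg : g ∈ openSegment ℝ x₁ x₂ := by
        refine ⟨‖m‖, ‖n‖, hmpos, hnpos, hsum, ?_⟩
        rw [hx₁, hx₂, smul_smul, smul_smul, mul_inv_cancel₀ hmpos.ne',
          mul_inv_cancel₀ hnpos.ne', one_smul, one_smul, ← hgdef]
      have hb₁ : x₁ ∈ closedBall (0 : StrongDual ℝ X) 1 := by
        simp [mem_closedBall, dist_zero_right, hnx₁]
      have hb₂ : x₂ ∈ closedBall (0 : StrongDual ℝ X) 1 := by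
        simp [mem_closedBall, dist_zero_right, hnx₂]
      have he₁ := hg.2 hb₁ hb₂ hseg
      have hgMmem : g ∈ M := he₁ ▸ M.smul_mem _ hm
      exact hgM hgMmem
    have hgN : g ∈ N := by
      have : g = n := by rw [← hgdef, hm0, zero_add]
      exact this ▸ hn
    have hfM : f ∈ M := Submodule.mem_span_singleton_self f
    calc ‖f - g‖ = ‖f + (-g)‖ := by rw [sub_eq_add_neg]
      _ = ‖f‖ + ‖-g‖ := hnorm f hfM (-g) (N.neg_mem hgN)
      _ = 2 := by rw [hnf, norm_neg, hng]; norm_num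
  refine ⟨main, ?_⟩
  intro f hf
  refine ⟨2, by norm_num, fun g hg hgf => ?_⟩
  have hf0 : f ≠ 0 := by
    rintro rfl
    exact hgf (ext_zero' hf g hg.1)
  by_cases hfng : f = -g
  · have : f - g = (2:ℝ) • f := by rw [hfng]; module
    rw [this, norm_smul]
    simp [ext_norm_one' hf hf0]
  · exact (main f hf g hg (Ne.symm hgf) hfng).ge
end
end

section
/- Let Ω be a compact Hausdorff space and X a real Banach space such that every very smooth point of X is a Fréchet smooth point of X. Then every very smooth point of C(Ω, X) is a Fréchet smooth point of C(Ω, X). -/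
open Filter Topology Metric Set NormedSpace MeasureTheory

noncomputable section

instance tripleDualNACG (Y : Type*) [NormedAddCommGroup Y] [NormedSpace ℝ Y] :
    NormedAddCommGroup (StrongDual ℝ (StrongDual ℝ (StrongDual ℝ Y))) :=
  ContinuousLinearMap.toNormedAddCommGroup (E := StrongDual ℝ (StrongDual ℝ Y)) (F := ℝ)
    (𝕜 := ℝ) (𝕜₂ := ℝ) (σ₁₂ := RingHom.id ℝ)

instance tripleDualNS (Y : Type*) [NormedAddCommGroup Y] [NormedSpace ℝ Y] :
    NormedSpace ℝ (StrongDual ℝ (StrongDual ℝ (StrongDual ℝ Y))) :=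
  ContinuousLinearMap.toNormedSpace (E := StrongDual ℝ (StrongDual ℝ Y)) (F := ℝ)
    (𝕜 := ℝ) (𝕜₂ := ℝ) (σ₁₂ := RingHom.id ℝ)

private lemma exists_ulim {ι : Type*} (U : Ultrafilter ι) (g : ι → ℝ) (M : ℝ)
    (hg : ∀ i, |g i| ≤ M) : ∃ r : ℝ, Tendsto g U (𝓝 r) := by
  have h1 : (U.map g : Filter ℝ) ≤ 𝓟 (Icc (-M) M) := by
    refine le_principal_iff.2 ?_
    exact Filter.mem_map.2 (Filter.univ_mem' fun i => abs_le.1 (hg i))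
  obtain ⟨r, -, hr⟩ := (isCompact_Icc (a := -M) (b := M)).ultrafilter_le_nhds (U.map g) h1
  exact ⟨r, hr⟩

private lemma exists_ulim_dual {E : Type*} [NormedAddCommGroup E] [NormedSpace ℝ E]
    {ι : Type*} (U : Ultrafilter ι) (T : ι → E) (M : ℝ) (hM : ∀ i, ‖T i‖ ≤ M) :
    ∃ Λ : StrongDual ℝ (StrongDual ℝ E), ‖Λ‖ ≤ M ∧
      ∀ μ : StrongDual ℝ E, Tendsto (fun i => μ (T i)) U (𝓝 (Λ μ)) := by
  have hι : Nonempty ι := Filter.nonempty_of_neBot U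
  have hM0 : 0 ≤ M := le_trans (norm_nonneg _) (hM hι.some)
  have key : ∀ μ : StrongDual ℝ E, ∃ r, Tendsto (fun i => μ (T i)) U (𝓝 r) := fun μ =>
    exists_ulim U _ (‖μ‖ * M) (fun i => by
      calc |μ (T i)| ≤ ‖μ‖ * ‖T i‖ := μ.le_opNorm _
        _ ≤ ‖μ‖ * M := mul_le_mul_of_nonneg_left (hM i) (norm_nonneg μ))
  choose L hL using key
  have hadd : ∀ μ ν, L (μ + ν) = L μ + L ν := fun μ ν =>
    tendsto_nhds_unique (hL (μ + ν)) (by simpa using (hL μ).add (hL ν))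
  have hsmul : ∀ (c : ℝ) μ, L (c • μ) = c * L μ := fun c μ =>
    tendsto_nhds_unique (hL (c • μ)) (by simpa using (hL μ).const_mul c)
  have hbound : ∀ μ : StrongDual ℝ E, ‖L μ‖ ≤ M * ‖μ‖ := by
    intro μ
    rw [Real.norm_eq_abs]
    refine le_of_tendsto (hL μ).abs (Filter.Eventually.of_forall fun i => ?_)
    calc |μ (T i)| ≤ ‖μ‖ * ‖T i‖ := μ.le_opNorm _
      _ ≤ ‖μ‖ * M := mul_le_mul_of_nonneg_left (hM i) (norm_nonneg μ)
      _ = M * ‖μ‖ := mul_comm _ _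
  refine ⟨LinearMap.mkContinuous
    { toFun := L
      map_add' := hadd
      map_smul' := fun c μ => by simpa [smul_eq_mul] using hsmul c μ } M hbound,
    LinearMap.mkContinuous_norm_le _ hM0 _, fun μ => hL μ⟩

private lemma norm_inclusion_j {E : Type*} [NormedAddCommGroup E] [NormedSpace ℝ E] (u : E) :
    ‖inclusionInDoubleDual ℝ E u‖ = ‖u‖ := (inclusionInDoubleDualLi ℝ).norm_map u

private def dm {E F : Type*} [NormedAddCommGroup E] [NormedSpace ℝ E]
    [NormedAddCommGroup F] [NormedSpace ℝ F] (A : E →L[ℝ] F) :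
    StrongDual ℝ F →L[ℝ] StrongDual ℝ E :=
  LinearMap.mkContinuous
    { toFun := fun φ => φ.comp A
      map_add' := fun φ ψ => by ext x; simp
      map_smul' := fun c φ => by ext x; simp }
    ‖A‖ (fun φ => (ContinuousLinearMap.opNorm_comp_le φ A).trans_eq (mul_comm _ _))

@[simp] private lemma dm_apply {E F : Type*} [NormedAddCommGroup E] [NormedSpace ℝ E]
    [NormedAddCommGroup F] [NormedSpace ℝ F] (A : E →L[ℝ] F) (φ : StrongDual ℝ F) (x : E) :
    dm A φ x = φ (A x) := rfl

private lemma dm_norm_le {E F : Type*} [NormedAddCommGroup E] [NormedSpace ℝ E]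
    [NormedAddCommGroup F] [NormedSpace ℝ F] (A : E →L[ℝ] F)
    (hA : ∀ x, ‖A x‖ ≤ ‖x‖) (φ : StrongDual ℝ F) : ‖dm A φ‖ ≤ ‖φ‖ := by
  refine ContinuousLinearMap.opNorm_le_bound _ (norm_nonneg φ) fun x => ?_
  calc ‖φ (A x)‖ ≤ ‖φ‖ * ‖A x‖ := φ.le_opNorm _
    _ ≤ ‖φ‖ * ‖x‖ := mul_le_mul_of_nonneg_left (hA x) (norm_nonneg φ)

private lemma dm_natural {E F : Type*} [NormedAddCommGroup E] [NormedSpace ℝ E]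
    [NormedAddCommGroup F] [NormedSpace ℝ F] (A : E →L[ℝ] F) (u : E) :
    dm (dm A) (inclusionInDoubleDual ℝ E u) = inclusionInDoubleDual ℝ F (A u) := rfl

private def constCLM (Ω : Type*) [TopologicalSpace Ω] [CompactSpace Ω]
    {X : Type*} [NormedAddCommGroup X] [NormedSpace ℝ X] : X →L[ℝ] C(Ω, X) :=
  LinearMap.mkContinuous
    { toFun := fun x => ContinuousMap.const Ω x
      map_add' := fun x y => rfl
      map_smul' := fun c x => rfl }
    1 (fun x => by
      rw [one_mul]
      exact (ContinuousMap.norm_le _ (norm_nonneg x)).mpr fun ω => le_rfl)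

set_option maxHeartbeats 2000000 in
theorem frechet_smooth_of_very_smooth_continuousMap
    {Ω : Type*} [TopologicalSpace Ω] [CompactSpace Ω] [T2Space Ω]
    {X : Type*} [NormedAddCommGroup X] [NormedSpace ℝ X] [CompleteSpace X]
    (hX : ∀ x : X, VerySmoothPoint X x → FrechetSmoothPoint X x)
    (f : C(Ω, X)) (hf : VerySmoothPoint C(Ω, X) f) :
    FrechetSmoothPoint C(Ω, X) f := by
  obtain ⟨⟨hf0, huniq⟩, hbsm⟩ := hf
  have hfpos : 0 < ‖f‖ := norm_pos_iff.mpr hf0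
  have hne : Nonempty Ω := by
    by_contra h
    exact hf0 (by ext ω; exact absurd ⟨ω⟩ h)
  -- maximizer
  obtain ⟨ω₀, -, hω₀⟩ := isCompact_univ.exists_isMaxOn univ_nonempty
      ((map_continuous f).norm.continuousOn (s := univ))
  have hω₀' : ∀ ω, ‖f ω‖ ≤ ‖f ω₀‖ := fun ω => hω₀ (mem_univ ω)
  have hx₀ : ‖f ω₀‖ = ‖f‖ :=
    le_antisymm (f.norm_coe_le_norm ω₀) ((f.norm_le (norm_nonneg _)).mpr hω₀')
  set x₀ : X := f ω₀ with hx₀def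
  have hx₀ne : x₀ ≠ 0 := by
    intro h
    rw [h, norm_zero] at hx₀
    exact hfpos.ne hx₀
  -- evaluation map
  set S : C(Ω, X) →L[ℝ] X := ContinuousMap.evalCLM ℝ ω₀ with hSdef
  have hSapp : ∀ g : C(Ω, X), S g = g ω₀ := fun g => rfl
  have hSle : ∀ g : C(Ω, X), ‖S g‖ ≤ ‖g‖ := fun g => g.norm_coe_le_norm ω₀
  -- norming functionals built from evaluations
  have hnorming : ∀ (ω : Ω) (y : StrongDual ℝ X), ‖y‖ ≤ 1 → y (f ω) = ‖f‖ →
      ‖y.comp (ContinuousMap.evalCLM ℝ (M := X) ω)‖ = 1 ∧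
      (y.comp (ContinuousMap.evalCLM ℝ (M := X) ω)) f = ‖f‖ := by
    intro ω y hyn hyf
    have happ : ∀ g : C(Ω, X), (y.comp (ContinuousMap.evalCLM ℝ (M := X) ω)) g = y (g ω) :=
      fun g => rfl
    have hle : ‖y.comp (ContinuousMap.evalCLM ℝ (M := X) ω)‖ ≤ 1 := by
      refine ContinuousLinearMap.opNorm_le_bound _ zero_le_one fun g => ?_
      rw [happ, one_mul]
      calc ‖y (g ω)‖ ≤ ‖y‖ * ‖g ω‖ := y.le_opNorm _
        _ ≤ 1 * ‖g‖ := mul_le_mul hyn (g.norm_coe_le_norm ω) (norm_nonneg _) zero_le_one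
        _ = ‖g‖ := one_mul _
    have hval : (y.comp (ContinuousMap.evalCLM ℝ (M := X) ω)) f = ‖f‖ := by
      rw [happ]; exact hyf
    refine ⟨le_antisymm hle ?_, hval⟩
    have := (y.comp (ContinuousMap.evalCLM ℝ (M := X) ω)).le_opNorm f
    rw [hval, Real.norm_eq_abs, abs_of_pos hfpos] at this
    have h1f : 1 * ‖f‖ ≤ ‖y.comp (ContinuousMap.evalCLM ℝ (M := X) ω)‖ * ‖f‖ := by
      rwa [one_mul]
    exact le_of_mul_le_mul_right h1f hfpos
  -- uniqueness of the maximizer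
  have humax : ∀ ω, ‖f ω‖ = ‖f‖ → ω = ω₀ := by
    intro ω hω
    by_contra hne'
    have hfω : f ω ≠ 0 := by
      intro h; rw [h, norm_zero] at hω; exact hfpos.ne hω
    obtain ⟨y₁, hy₁n, hy₁⟩ := exists_dual_vector ℝ (f ω) (norm_ne_zero_iff.mpr hfω)
    obtain ⟨y₂, hy₂n, hy₂⟩ := exists_dual_vector ℝ x₀ (norm_ne_zero_iff.mpr hx₀ne)
    have hy₁' : y₁ (f ω) = ‖f‖ := by rw [hy₁]; exact_mod_cast hω
    have hy₂' : y₂ (f ω₀) = ‖f‖ := by rw [hy₂]; exact_mod_cast hx₀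
    obtain ⟨χ, hχ0, hχ1, hχmem⟩ := exists_continuous_zero_one_of_isClosed
      (isClosed_singleton (x := ω₀)) (isClosed_singleton (x := ω))
      (by simpa [Set.disjoint_singleton] using (Ne.symm hne'))
    set g : C(Ω, X) := ⟨fun t => χ t • f t, (map_continuous χ).smul (map_continuous f)⟩ with hgdef
    have h₁ := hnorming ω y₁ hy₁n.le hy₁'
    have h₂ := hnorming ω₀ y₂ hy₂n.le hy₂'
    have heq := (huniq.unique h₁ h₂ : y₁.comp (ContinuousMap.evalCLM ℝ (M := X) ω)
      = y₂.comp (ContinuousMap.evalCLM ℝ (M := X) ω₀))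
    have hval1 : (y₁.comp (ContinuousMap.evalCLM ℝ (M := X) ω)) g = ‖f‖ := by
      show y₁ (g ω) = ‖f‖
      have : g ω = f ω := by
        show χ ω • f ω = f ω
        rw [hχ1 rfl]; exact one_smul _ _
      rw [this]; exact hy₁'
    have hval2 : (y₂.comp (ContinuousMap.evalCLM ℝ (M := X) ω₀)) g = 0 := by
      show y₂ (g ω₀) = 0
      have : g ω₀ = 0 := by
        show χ ω₀ • f ω₀ = 0
        rw [hχ0 rfl]; exact zero_smul _ _
      rw [this]; exact map_zero y₂
    rw [heq, hval2] at hval1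
    exact hfpos.ne hval1
  -- the norming functional at x₀
  obtain ⟨xs, hxsn, hxs⟩ := exists_dual_vector ℝ x₀ (norm_ne_zero_iff.mpr hx₀ne)
  have hxs' : xs x₀ = ‖x₀‖ := by exact_mod_cast hxs
  have hxsf : xs (f ω₀) = ‖f‖ := by rw [← hx₀]; exact hxs'
  -- x₀ is a very smooth point of X
  have hvs : VerySmoothPoint X x₀ := by
    constructor
    · refine ⟨hx₀ne, xs, ⟨hxsn, hxs'⟩, ?_⟩
      intro y ⟨hyn, hy⟩
      have hyf : y (f ω₀) = ‖f‖ := by rw [← hx₀]; exact hy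
      have h₁ := hnorming ω₀ y hyn.le hyf
      have h₂ := hnorming ω₀ xs hxsn.le hxsf
      have heq := (huniq.unique h₁ h₂ : y.comp (ContinuousMap.evalCLM ℝ (M := X) ω₀)
        = xs.comp (ContinuousMap.evalCLM ℝ (M := X) ω₀))
      ext x
      have := DFunLike.congr_fun heq (ContinuousMap.const Ω x)
      exact this
    · -- bidual smoothness of x₀
      have hjx₀ne : inclusionInDoubleDual ℝ X x₀ ≠ 0 := by
        intro h
        have := norm_inclusion_j x₀
        rw [h, norm_zero (E := StrongDual ℝ (StrongDual ℝ X))] at this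
        exact hx₀ne (norm_eq_zero.mp this.symm)
      obtain ⟨Λ₀, hΛ₀n, hΛ₀⟩ := exists_dual_vector ℝ (inclusionInDoubleDual ℝ X x₀)
        (by rw [norm_inclusion_j]; exact norm_ne_zero_iff.mpr hx₀ne)
      refine ⟨hjx₀ne, Λ₀, ⟨hΛ₀n, by exact_mod_cast hΛ₀⟩, ?_⟩
      intro Λ ⟨hΛn, hΛ⟩
      -- transfer to C(Ω,X)*** via dm (dm S)
      have key : ∀ M : StrongDual ℝ (StrongDual ℝ (StrongDual ℝ X)), ‖M‖ = 1 →
          M (inclusionInDoubleDual ℝ X x₀) = ‖inclusionInDoubleDual ℝ X x₀‖ →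
          ∀ Ψ : StrongDual ℝ (StrongDual ℝ X), M Ψ = (M.comp (dm (dm S))) (dm (dm (constCLM Ω)) Ψ) := by
        intro M hMn hMx Ψ
        have : dm (dm S) (dm (dm (constCLM Ω)) Ψ) = Ψ := by
          ext φ
          rfl
        rw [ContinuousLinearMap.comp_apply, this]
      have main : ∀ M : StrongDual ℝ (StrongDual ℝ (StrongDual ℝ X)), ‖M‖ = 1 →
          M (inclusionInDoubleDual ℝ X x₀) = ‖inclusionInDoubleDual ℝ X x₀‖ →
          ‖M.comp (dm (dm S))‖ = 1 ∧
          (M.comp (dm (dm S))) (inclusionInDoubleDual ℝ C(Ω, X) f)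
            = ‖inclusionInDoubleDual ℝ C(Ω, X) f‖ := by
        intro M hMn hMx
        have hval : (M.comp (dm (dm S))) (inclusionInDoubleDual ℝ C(Ω, X) f)
            = ‖inclusionInDoubleDual ℝ C(Ω, X) f‖ := by
          rw [ContinuousLinearMap.comp_apply, dm_natural, hSapp, ← hx₀def, hMx,
            norm_inclusion_j, norm_inclusion_j, hx₀]
        refine ⟨le_antisymm ?_ ?_, hval⟩
        · refine ContinuousLinearMap.opNorm_le_bound _ zero_le_one fun Ψ => ?_
          rw [one_mul, ContinuousLinearMap.comp_apply]
          calc ‖M (dm (dm S) Ψ)‖ ≤ ‖M‖ * ‖dm (dm S) Ψ‖ :=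
              ContinuousLinearMap.le_opNorm (E := StrongDual ℝ (StrongDual ℝ X)) (F := ℝ)
                (𝕜 := ℝ) (𝕜₂ := ℝ) (σ₁₂ := RingHom.id ℝ) M _
            _ ≤ 1 * ‖Ψ‖ := by
                rw [hMn]
                exact mul_le_mul_of_nonneg_left
                  (dm_norm_le (dm S) (fun φ => dm_norm_le S hSle φ) Ψ) zero_le_one
            _ = ‖Ψ‖ := one_mul _
        · have h1 := (M.comp (dm (dm S))).le_opNorm (inclusionInDoubleDual ℝ C(Ω, X) f)
          rw [hval, norm_inclusion_j, Real.norm_eq_abs, abs_of_pos hfpos] at h1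
          have : 1 * ‖f‖ ≤ ‖M.comp (dm (dm S))‖ * ‖f‖ := by rwa [one_mul]
          exact le_of_mul_le_mul_right this hfpos
      have hM1 := main Λ hΛn (by exact_mod_cast hΛ)
      have hM2 := main Λ₀ hΛ₀n (by exact_mod_cast hΛ₀)
      have heq := hbsm.2.unique hM1 hM2
      ext Ψ
      rw [key Λ hΛn (by exact_mod_cast hΛ) Ψ, key Λ₀ hΛ₀n (by exact_mod_cast hΛ₀) Ψ, heq]
  -- isolation of ω₀ and the gap
  have hisol : ∃ r, r < ‖f‖ ∧ ∀ ω, ω ≠ ω₀ → ‖f ω‖ ≤ r := by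
    by_cases hNB : (𝓝[≠] ω₀).NeBot
    · exfalso
      obtain ⟨U, hU⟩ := @Filter.exists_ultrafilter_le _ _ hNB
      set T : Ω → StrongDual ℝ C(Ω, X) := fun ω => xs.comp (ContinuousMap.evalCLM ℝ (M := X) ω)
        with hTdef
      have hTapp : ∀ (ω : Ω) (g : C(Ω, X)), T ω g = xs (g ω) := fun ω g => rfl
      have hTnorm : ∀ ω, ‖T ω‖ ≤ 1 := by
        intro ω
        refine ContinuousLinearMap.opNorm_le_bound _ zero_le_one fun g => ?_
        rw [hTapp, one_mul]
        calc ‖xs (g ω)‖ ≤ ‖xs‖ * ‖g ω‖ := xs.le_opNorm _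
          _ = ‖g ω‖ := by rw [hxsn, one_mul]
          _ ≤ ‖g‖ := g.norm_coe_le_norm ω
      obtain ⟨Λ₂, hΛ₂n, hΛ₂⟩ := exists_ulim_dual U T 1 hTnorm
      -- the functions g_s
      have hφs : ∀ s : Finset Ω, ∃ χ : C(Ω, ℝ), χ ω₀ = 1 ∧ (∀ t, χ t ∈ Icc (0:ℝ) 1) ∧
          ∀ ω ∈ s, ω ≠ ω₀ → χ ω = 0 := by
        intro s
        have hcl : IsClosed ((s : Set Ω) \ {ω₀}) :=
          ((s.finite_toSet.subset (diff_subset)).isClosed)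
        obtain ⟨χ, h0, h1, hmem⟩ := exists_continuous_zero_one_of_isClosed hcl
          isClosed_singleton (by
            rw [Set.disjoint_singleton_right]
            exact fun h => h.2 rfl)
        exact ⟨χ, h1 rfl, hmem, fun ω hωs hωne => h0 ⟨hωs, hωne⟩⟩
      choose χ hχ1 hχmem hχ0 using hφs
      set g : Finset Ω → C(Ω, X) := fun s =>
        ⟨fun t => (1 - χ s t) • f t,
          ((continuous_const.sub (map_continuous (χ s))).smul (map_continuous f))⟩ with hgdef
      have hgapp : ∀ s t, g s t = (1 - χ s t) • f t := fun s t => rfl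
      have hgnorm : ∀ s, ‖g s‖ ≤ ‖f‖ := by
        intro s
        refine (ContinuousMap.norm_le _ (norm_nonneg f)).mpr fun t => ?_
        rw [hgapp, norm_smul, Real.norm_eq_abs]
        have h01 := hχmem s t
        have habs : |1 - χ s t| ≤ 1 := by
          rw [abs_le]; constructor <;> [linarith [h01.2]; linarith [h01.1]]
        calc |1 - χ s t| * ‖f t‖ ≤ 1 * ‖f‖ :=
          mul_le_mul habs (f.norm_coe_le_norm t) (norm_nonneg _) zero_le_one
          _ = ‖f‖ := one_mul _
      obtain ⟨W, hW⟩ := Filter.exists_ultrafilter_le (atTop : Filter (Finset Ω))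
      obtain ⟨Ψ, hΨn, hΨ⟩ := exists_ulim_dual W g ‖f‖ hgnorm
      -- values of Ψ
      have hΨ0 : Ψ (T ω₀) = 0 := by
        refine tendsto_nhds_unique (hΨ (T ω₀)) ?_
        have : ∀ s, T ω₀ (g s) = 0 := by
          intro s
          rw [hTapp, hgapp, hχ1 s, sub_self, zero_smul, map_zero]
        simpa [this] using tendsto_const_nhds
      have hΨω : ∀ ω, ω ≠ ω₀ → Ψ (T ω) = xs (f ω) := by
        intro ω hω
        refine tendsto_nhds_unique (hΨ (T ω)) ?_
        refine Tendsto.congr'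
          (f₁ := fun _ : Finset Ω => xs (f ω)) ?_ tendsto_const_nhds
        have hev : ∀ᶠ s : Finset Ω in atTop, ω ∈ s :=
          eventually_atTop.mpr ⟨{ω}, fun s hs => hs (Finset.mem_singleton_self ω)⟩
        have hevW : ∀ᶠ s in (W : Filter (Finset Ω)), ω ∈ s := hW hev
        refine (hevW.mono fun s hs => ?_)
        show xs (f ω) = T ω (g s)
        rw [hTapp, hgapp, hχ0 s ω hs hω, sub_zero, one_smul]
      -- limit along U of xs (f ω) is ‖f‖
      have htend : Tendsto (fun ω => xs (f ω)) (U : Filter Ω) (𝓝 ‖f‖) := by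
        have hc : Tendsto (fun ω => xs (f ω)) (𝓝 ω₀) (𝓝 (xs (f ω₀))) :=
          (xs.continuous.comp (map_continuous f)).tendsto ω₀
        rw [hxsf] at hc
        exact hc.mono_left (hU.trans nhdsWithin_le_nhds)
      have hUne : ∀ᶠ ω in (U : Filter Ω), ω ≠ ω₀ :=
        hU self_mem_nhdsWithin
      have hΛ₂Ψ : Λ₂ Ψ = ‖f‖ := by
        refine tendsto_nhds_unique (hΛ₂ Ψ) (htend.congr' ?_)
        exact hUne.mono fun ω hω => (hΨω ω hω).symm
      have hΛ₂jf : Λ₂ (inclusionInDoubleDual ℝ C(Ω, X) f) = ‖f‖ := by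
        refine tendsto_nhds_unique (hΛ₂ _) (htend.congr ?_)
        intro ω; rfl
      -- Λ₁
      set Λ₁ : StrongDual ℝ (StrongDual ℝ (StrongDual ℝ C(Ω, X))) :=
        inclusionInDoubleDual ℝ (StrongDual ℝ C(Ω, X)) (T ω₀) with hΛ₁def
      have hΛ₁jf : Λ₁ (inclusionInDoubleDual ℝ C(Ω, X) f) = ‖f‖ := by
        show (inclusionInDoubleDual ℝ C(Ω, X) f) (T ω₀) = ‖f‖
        show T ω₀ f = ‖f‖
        rw [hTapp]; exact hxsf
      have hΛ₁Ψ : Λ₁ Ψ = 0 := hΨ0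
      have hΛ₁n : ‖Λ₁‖ ≤ 1 := by rw [hΛ₁def, norm_inclusion_j]; exact hTnorm ω₀
      -- both are norm-one norming functionals for j f
      have hjfn : ‖inclusionInDoubleDual ℝ C(Ω, X) f‖ = ‖f‖ := norm_inclusion_j f
      have hnorm1 : ∀ M : StrongDual ℝ (StrongDual ℝ (StrongDual ℝ C(Ω, X))), ‖M‖ ≤ 1 →
          M (inclusionInDoubleDual ℝ C(Ω, X) f) = ‖f‖ → ‖M‖ = 1 := by
        intro M hMle hMv
        refine le_antisymm hMle ?_
        have h1 : ‖M (inclusionInDoubleDual ℝ C(Ω, X) f)‖ ≤ ‖M‖ * ‖inclusionInDoubleDual ℝ C(Ω, X) f‖ :=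
          ContinuousLinearMap.le_opNorm (E := StrongDual ℝ (StrongDual ℝ C(Ω, X))) (F := ℝ)
            (𝕜 := ℝ) (𝕜₂ := ℝ) (σ₁₂ := RingHom.id ℝ) M (inclusionInDoubleDual ℝ C(Ω, X) f)
        rw [hMv, hjfn, Real.norm_eq_abs, abs_of_pos hfpos] at h1
        have : 1 * ‖f‖ ≤ ‖M‖ * ‖f‖ := by rwa [one_mul]
        exact le_of_mul_le_mul_right this hfpos
      have heq : Λ₁ = Λ₂ := hbsm.2.unique
        ⟨hnorm1 Λ₁ hΛ₁n hΛ₁jf, by rw [hΛ₁jf, hjfn]⟩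
        ⟨hnorm1 Λ₂ hΛ₂n hΛ₂jf, by rw [hΛ₂jf, hjfn]⟩
      rw [heq, hΛ₂Ψ] at hΛ₁Ψ
      exact hfpos.ne' hΛ₁Ψ
    · -- ω₀ is isolated
      rw [not_neBot] at hNB
      have hopen : IsOpen ({ω₀} : Set Ω) := by
        have : ∅ ∈ 𝓝[≠] ω₀ := by rw [hNB]; exact Filter.mem_bot
        obtain ⟨U', hU'open, hU'mem, hU'sub⟩ := mem_nhdsWithin.mp this
        have : U' ⊆ {ω₀} := fun t ht => by
          by_contra h
          exact (hU'sub ⟨ht, h⟩)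
        have hUeq : U' = {ω₀} := Subset.antisymm this (by simpa using hU'mem)
        rw [← hUeq]; exact hU'open
      have hclosed : IsClosed ({ω₀}ᶜ : Set Ω) := hopen.isClosed_compl
      rcases eq_empty_or_nonempty ({ω₀}ᶜ : Set Ω) with hemp | hnon
      · refine ⟨‖f‖ / 2, half_lt_self hfpos, fun ω hω => ?_⟩
        have hmem : ω ∈ ({ω₀}ᶜ : Set Ω) := Set.mem_compl_singleton_iff.mpr hω
        rw [hemp] at hmem
        exact absurd hmem (notMem_empty ω)
      · obtain ⟨ω₁, hω₁mem, hω₁max⟩ := (hclosed.isCompact).exists_isMaxOn hnon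
          ((map_continuous f).norm.continuousOn)
        refine ⟨‖f ω₁‖, ?_, fun ω hω => hω₁max (Set.mem_compl_singleton_iff.mpr hω)⟩
        refine lt_of_le_of_ne (f.norm_coe_le_norm ω₁) fun h => ?_
        exact hω₁mem (by simp [humax ω₁ h])
  -- conclusion: Fréchet smoothness
  obtain ⟨r, hrlt, hrbound⟩ := hisol
  obtain ⟨F, hF⟩ := hX x₀ hvs
  refine ⟨F.comp (ContinuousMap.evalCLM ℝ ω₀), ?_⟩
  rw [Metric.tendsto_nhdsWithin_nhds] at hF ⊢
  intro ε hε
  obtain ⟨δ₁, hδ₁, hFδ⟩ := hF (ε / 2) (half_pos hε)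
  refine ⟨min δ₁ ((‖f‖ - r) / 2), lt_min hδ₁ (by linarith), ?_⟩
  intro g hgmem hgdist
  have hgne : g ≠ 0 := hgmem
  have hgpos : 0 < ‖g‖ := norm_pos_iff.mpr hgne
  rw [dist_zero_right] at hgdist
  have hg1 : ‖g‖ < δ₁ := lt_of_lt_of_le hgdist (min_le_left _ _)
  have hg2 : ‖g‖ < (‖f‖ - r) / 2 := lt_of_lt_of_le hgdist (min_le_right _ _)
  -- localization of the norm
  have hloc : ‖f + g‖ = ‖x₀ + g ω₀‖ := by
    refine le_antisymm ?_ ?_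
    · refine (ContinuousMap.norm_le _ (norm_nonneg _)).mpr fun ω => ?_
      by_cases hω : ω = ω₀
      · subst hω
        exact le_of_eq rfl
      · have h1 : ‖f ω + g ω‖ ≤ r + ‖g‖ := by
          calc ‖f ω + g ω‖ ≤ ‖f ω‖ + ‖g ω‖ := norm_add_le _ _
            _ ≤ r + ‖g‖ := add_le_add (hrbound ω hω) (g.norm_coe_le_norm ω)
        have h2 : ‖x₀‖ - ‖g ω₀‖ ≤ ‖x₀ + g ω₀‖ := by
          have := norm_add_le (x₀ + g ω₀) (-(g ω₀))
          simpa using this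
        have h3 : ‖g ω₀‖ ≤ ‖g‖ := g.norm_coe_le_norm ω₀
        show ‖(f + g) ω‖ ≤ ‖x₀ + g ω₀‖
        have : (f + g) ω = f ω + g ω := rfl
        rw [this]
        have hx₀' : ‖x₀‖ = ‖f‖ := hx₀
        linarith
    · have : (f + g) ω₀ = x₀ + g ω₀ := rfl
      calc ‖x₀ + g ω₀‖ = ‖(f + g) ω₀‖ := by rw [this]
        _ ≤ ‖f + g‖ := (f + g).norm_coe_le_norm ω₀
  -- remainder estimate
  have hy : ‖g ω₀‖ < δ₁ := lt_of_le_of_lt (g.norm_coe_le_norm ω₀) hg1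
  have hR : |‖x₀ + g ω₀‖ - ‖x₀‖ - F (g ω₀)| ≤ ε / 2 * ‖g‖ := by
    by_cases h0 : g ω₀ = 0
    · rw [h0, add_zero, sub_self, map_zero, sub_zero, abs_zero]
      positivity
    · have hmem : g ω₀ ∈ ({0}ᶜ : Set X) := h0
      have := hFδ hmem (by rwa [dist_zero_right])
      rw [dist_zero_right, Real.norm_eq_abs, abs_div, abs_of_pos (norm_pos_iff.mpr h0)] at this
      have h1 : |‖x₀ + g ω₀‖ - ‖x₀‖ - F (g ω₀)| < ε / 2 * ‖g ω₀‖ := by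
        rwa [div_lt_iff₀ (norm_pos_iff.mpr h0)] at this
      calc |‖x₀ + g ω₀‖ - ‖x₀‖ - F (g ω₀)| ≤ ε / 2 * ‖g ω₀‖ := h1.le
        _ ≤ ε / 2 * ‖g‖ := mul_le_mul_of_nonneg_left (g.norm_coe_le_norm ω₀) (by positivity)
  -- finish
  rw [dist_zero_right, Real.norm_eq_abs]
  have happ : (F.comp (ContinuousMap.evalCLM ℝ (M := X) ω₀)) g = F (g ω₀) := rfl
  rw [happ, hloc]
  have hx₀' : ‖f‖ = ‖x₀‖ := hx₀.symm
  rw [hx₀']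
  rw [abs_div, abs_of_pos hgpos, div_lt_iff₀ hgpos]
  calc |‖x₀ + g ω₀‖ - ‖x₀‖ - F (g ω₀)| ≤ ε / 2 * ‖g‖ := hR
    _ < ε * ‖g‖ := by nlinarith
end
end

section
/- Let X be a real Banach space with X = M ⊕_∞ N for closed subspaces M, N. Let x = m + n with m ∈ M, n ∈ N, ‖m‖ = 1 and ‖n‖ < 1. If m is a QP point of the Banach space M, then x is a QP point of X. -/
open Filter Topology Metric Set NormedSpace MeasureTheory

noncomputable section

lemma aux_fy_le_one {X : Type*} [NormedAddCommGroup X] [NormedSpace ℝ X]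
    (f : StrongDual ℝ X) (hf : ‖f‖ ≤ 1) {y : X} (hy : ‖y‖ ≤ 1) : f y ≤ 1 := by
  calc f y ≤ |f y| := le_abs_self _
    _ = ‖f y‖ := rfl
    _ ≤ ‖f‖ * ‖y‖ := f.le_opNorm y
    _ ≤ 1 * 1 := by
        apply mul_le_mul hf hy (norm_nonneg _) zero_le_one
    _ = 1 := by ring

/-- If `f m + f n = 1`, `‖f‖ ≤ 1`, `‖m‖ ≤ 1`, `‖n‖ < 1`, then `f n = 0` (and so `f m = 1`). -/
lemma aux_key {X : Type*} [NormedAddCommGroup X] [NormedSpace ℝ X]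
    (M N : Submodule ℝ X)
    (hmax : ∀ m ∈ M, ∀ n ∈ N, ‖m + n‖ = max ‖m‖ ‖n‖)
    {m n : X} (hm : m ∈ M) (hn : n ∈ N) (hm1 : ‖m‖ ≤ 1) (hn1 : ‖n‖ < 1)
    (f : StrongDual ℝ X) (hf : ‖f‖ ≤ 1) (hsum : f m + f n = 1) : f n = 0 := by
  by_cases hn0 : n = 0
  · simp [hn0]
  have hnpos : (0 : ℝ) < ‖n‖ := norm_pos_iff.mpr hn0
  set t : ℝ := ‖n‖⁻¹ with ht
  have ht1 : 1 < t := (one_lt_inv_iff₀).mpr ⟨hnpos, hn1⟩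
  -- f n ≤ 0
  have h1 : f (m + t • n) ≤ 1 := by
    apply aux_fy_le_one f hf
    have : ‖m + t • n‖ = max ‖m‖ ‖t • n‖ := hmax m hm (t • n) (N.smul_mem t hn)
    rw [this, norm_smul]
    have : ‖t‖ * ‖n‖ = 1 := by
      rw [Real.norm_eq_abs, abs_of_pos (by positivity : (0:ℝ) < t), ht]
      field_simp
    rw [this]
    exact max_le hm1 le_rfl
  have h1' : f m + t * f n ≤ 1 := by
    have := h1
    rwa [map_add, _root_.map_smul, smul_eq_mul] at this
  have hfn_le : f n ≤ 0 := by nlinarith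
  -- f n ≥ 0
  have h2 : f (m + (-1 : ℝ) • n) ≤ 1 := by
    apply aux_fy_le_one f hf
    have : ‖m + (-1 : ℝ) • n‖ = max ‖m‖ ‖(-1 : ℝ) • n‖ :=
      hmax m hm ((-1 : ℝ) • n) (N.smul_mem _ hn)
    rw [this, norm_smul]
    simp only [norm_neg, norm_one]
    exact max_le hm1 (by simpa using hn1.le)
  have h2' : f m - f n ≤ 1 := by
    have := h2
    rw [map_add, _root_.map_smul, smul_eq_mul] at this
    linarith
  have hfn_ge : (0 : ℝ) ≤ f n := by linarith
  linarith

/-- If `f m = 1`, `‖f‖ ≤ 1`, `‖m‖ ≤ 1`, `‖n‖ ≤ 1`, then `f n = 0`. -/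
lemma aux_key2 {X : Type*} [NormedAddCommGroup X] [NormedSpace ℝ X]
    (M N : Submodule ℝ X)
    (hmax : ∀ m ∈ M, ∀ n ∈ N, ‖m + n‖ = max ‖m‖ ‖n‖)
    {m n : X} (hm : m ∈ M) (hn : n ∈ N) (hm1 : ‖m‖ ≤ 1) (hn1 : ‖n‖ ≤ 1)
    (f : StrongDual ℝ X) (hf : ‖f‖ ≤ 1) (hfm : f m = 1) : f n = 0 := by
  have h1 : f (m + n) ≤ 1 := by
    apply aux_fy_le_one f hf
    rw [hmax m hm n hn]
    exact max_le hm1 hn1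
  have h2 : f (m + (-1 : ℝ) • n) ≤ 1 := by
    apply aux_fy_le_one f hf
    rw [hmax m hm _ (N.smul_mem _ hn), norm_smul]
    simp only [norm_neg, norm_one]
    exact max_le hm1 (by simpa using hn1)
  rw [map_add, hfm] at h1
  rw [map_add, _root_.map_smul, smul_eq_mul, hfm] at h2
  linarith

theorem qp_point_of_MSumDecomp
    {X : Type*} [NormedAddCommGroup X] [NormedSpace ℝ X] [CompleteSpace X]
    (M N : Submodule ℝ X) (hdec : MSumDecomp M N)
    (m n : X) (hm : m ∈ M) (hn : n ∈ N) (hm1 : ‖m‖ = 1) (hn1 : ‖n‖ < 1)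
    (hQP : QPPoint M (⟨m, hm⟩ : M)) :
    QPPoint X (m + n) := by
  obtain ⟨hMc, hNc, hinf, hsup, hmax⟩ := hdec
  obtain ⟨δM, hδM, hQPm⟩ := hQP
  refine ⟨min δM (1 - ‖n‖), lt_min hδM (by linarith), ?_⟩
  intro z hz hzx f hfz
  obtain ⟨hf1, hfz1⟩ := hfz
  -- decompose z
  have hzmem : z ∈ M ⊔ N := by rw [hsup]; exact Submodule.mem_top
  obtain ⟨m', hm', n', hn', hz'⟩ := Submodule.mem_sup.1 hzmem
  -- projection bounds
  have hdiff : z - (m + n) = (m' - m) + (n' - n) := by rw [← hz']; abel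
  have hdnorm : ‖z - (m + n)‖ = max ‖m' - m‖ ‖n' - n‖ := by
    rw [hdiff]; exact hmax _ (M.sub_mem hm' hm) _ (N.sub_mem hn' hn)
  have hmm : ‖m' - m‖ < δM := by
    have h : ‖m' - m‖ ≤ ‖z - (m + n)‖ := by rw [hdnorm]; exact le_max_left _ _
    exact lt_of_le_of_lt h (lt_of_lt_of_le hzx (min_le_left _ _))
  have hnn : ‖n' - n‖ < 1 - ‖n‖ := by
    have h : ‖n' - n‖ ≤ ‖z - (m + n)‖ := by rw [hdnorm]; exact le_max_right _ _
    exact lt_of_le_of_lt h (lt_of_lt_of_le hzx (min_le_right _ _))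
  have hn'1 : ‖n'‖ < 1 := by
    calc ‖n'‖ = ‖n + (n' - n)‖ := by congr 1; abel
      _ ≤ ‖n‖ + ‖n' - n‖ := norm_add_le _ _
      _ < 1 := by linarith
  have hzn : ‖z‖ = max ‖m'‖ ‖n'‖ := by rw [← hz']; exact hmax _ hm' _ hn'
  have hm'1 : ‖m'‖ = 1 := by
    rw [hz] at hzn
    rcases max_cases ‖m'‖ ‖n'‖ with ⟨h, _⟩ | ⟨h, _⟩
    · rw [h] at hzn; exact hzn.symm
    · rw [h] at hzn; linarith
  -- f n' = 0, f m' = 1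
  have hsum' : f m' + f n' = 1 := by rw [← map_add, hz', hfz1]
  have hfn' : f n' = 0 := aux_key M N hmax hm' hn' hm'1.le hn'1 f hf1 hsum'
  have hfm' : f m' = 1 := by linarith
  -- restrict f to M
  set g : StrongDual ℝ M := f.comp M.subtypeL with hg
  have hg1 : ‖g‖ ≤ 1 := by
    apply ContinuousLinearMap.opNorm_le_bound _ zero_le_one
    intro x
    calc ‖g x‖ = ‖f (x : X)‖ := rfl
      _ ≤ ‖f‖ * ‖(x : X)‖ := f.le_opNorm _
      _ ≤ 1 * ‖x‖ := by
          apply mul_le_mul_of_nonneg_right hf1 (norm_nonneg _)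
  have hgm' : g (⟨m', hm'⟩ : M) = 1 := hfm'
  have hstate : g ∈ StateSpace (⟨m', hm'⟩ : M) := ⟨hg1, hgm'⟩
  have hznorm : ‖(⟨m', hm'⟩ : M)‖ = 1 := hm'1
  have hzdist : ‖(⟨m', hm'⟩ : M) - (⟨m, hm⟩ : M)‖ < δM := by
    show ‖m' - m‖ < δM
    exact hmm
  have hgoal := hQPm _ hznorm hzdist hstate
  have hfm : f m = 1 := hgoal.2
  have hfn : f n = 0 := aux_key2 M N hmax hm hn hm1.le hn1.le f hf1 hfm
  exact ⟨hf1, by rw [map_add, hfm, hfn]; ring⟩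
end
end

section
/- Let X be a real Banach space with X = M ⊕_∞ N for closed subspaces M, N. If m ∈ M is a unit vector which is a QP point of the Banach space M, then m is a QP point of X. -/
open Filter Topology Metric Set NormedSpace MeasureTheory

noncomputable section

theorem qp_point_of_MSummand
    {X : Type*} [NormedAddCommGroup X] [NormedSpace ℝ X] [CompleteSpace X]
    (M N : Submodule ℝ X) (hdec : MSumDecomp M N)
    (m : X) (hm : m ∈ M) (hm1 : ‖m‖ = 1)
    (hQP : QPPoint M (⟨m, hm⟩ : M)) :
    QPPoint X m := by
  obtain ⟨_, _, _, hsup, hmax⟩ := hdec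
  obtain ⟨δ, hδ, hδQP⟩ := hQP
  refine ⟨min δ 1, lt_min hδ one_pos, fun z hz1 hzm f hf => ?_⟩
  obtain ⟨hfn, hfz⟩ := hf
  -- decompose z
  have hzmem : z ∈ M ⊔ N := by rw [hsup]; trivial
  obtain ⟨zm, hzmM, zn, hznN, hsum⟩ := Submodule.mem_sup.mp hzmem
  -- norms
  have hdiff : ‖z - m‖ = max ‖zm - m‖ ‖zn‖ := by
    have : z - m = (zm - m) + zn := by rw [← hsum]; abel
    rw [this, hmax _ (M.sub_mem hzmM hm) _ hznN]
  have hzn1 : ‖zn‖ < 1 := lt_of_le_of_lt (le_max_right _ _)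
    (hdiff ▸ lt_of_lt_of_le hzm (min_le_right _ _))
  have hznorm : ‖z‖ = max ‖zm‖ ‖zn‖ := by rw [← hsum, hmax _ hzmM _ hznN]
  have hzm1 : ‖zm‖ = 1 := by
    rcases max_cases ‖zm‖ ‖zn‖ with ⟨h1, _⟩ | ⟨h1, _⟩
    · rw [hznorm, h1] at hz1; exact hz1
    · rw [hznorm, h1] at hz1; linarith
  have hzmd : ‖zm - m‖ < δ := lt_of_le_of_lt (le_max_left _ ‖zn‖)
    (hdiff ▸ lt_of_lt_of_le hzm (min_le_left _ _))
  -- f(zm) ≤ 1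
  have hfzm_le : f zm ≤ 1 := by
    calc f zm ≤ ‖f zm‖ := le_abs_self _
    _ ≤ ‖f‖ * ‖zm‖ := f.le_opNorm zm
    _ ≤ 1 := by rw [hzm1]; simpa using hfn
  -- the restriction of f to N has norm ≤ 1 - f zm
  have key : ∀ n ∈ N, ‖n‖ ≤ 1 → f n ≤ 1 - f zm := by
    intro n hn hn1
    have h1 : f (zm + n) ≤ 1 := by
      calc f (zm + n) ≤ ‖f (zm + n)‖ := le_abs_self _
      _ ≤ ‖f‖ * ‖zm + n‖ := f.le_opNorm _
      _ ≤ ‖zm + n‖ := by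
          rw [hmax _ hzmM _ hn, hzm1]
          nlinarith [norm_nonneg n, max_le (le_refl (1:ℝ)) hn1, le_max_left (1:ℝ) ‖n‖]
      _ = 1 := by rw [hmax _ hzmM _ hn, hzm1, max_eq_left hn1]
    have := f.map_add zm n
    linarith [h1, this ▸ (le_refl (f (zm+n)))]
  have key' : ∀ n ∈ N, |f n| ≤ (1 - f zm) * ‖n‖ := by
    intro n hn
    rcases eq_or_ne n 0 with rfl | hne
    · simp
    have hnn : (0:ℝ) < ‖n‖ := norm_pos_iff.mpr hne
    have h1 : f (‖n‖⁻¹ • n) ≤ 1 - f zm := by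
      refine key _ (N.smul_mem _ hn) ?_
      rw [norm_smul, norm_inv, norm_norm, inv_mul_cancel₀ hnn.ne']
    have h2 : f (-(‖n‖⁻¹ • n)) ≤ 1 - f zm := by
      refine key _ (N.neg_mem (N.smul_mem _ hn)) ?_
      rw [norm_neg, norm_smul, norm_inv, norm_norm, inv_mul_cancel₀ hnn.ne']
    rw [f.map_smul, smul_eq_mul] at h1
    rw [map_neg, f.map_smul, smul_eq_mul] at h2
    rw [abs_le]
    constructor <;>
      nlinarith [mul_le_mul_of_nonneg_left h1 hnn.le,
        mul_le_mul_of_nonneg_left h2 hnn.le, mul_inv_cancel₀ hnn.ne']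
  -- conclude f zm = 1
  have hfzn : f zm + f zn = 1 := by rw [← f.map_add, hsum, hfz]
  have hfzm1 : f zm = 1 := by
    have h1 : |f zn| ≤ (1 - f zm) * ‖zn‖ := key' _ hznN
    have h2 : f zn = 1 - f zm := by linarith
    nlinarith [le_abs_self (f zn), norm_nonneg zn]
  -- restrict to M and apply QP
  set F : StrongDual ℝ M := f.comp M.subtypeL with hF
  have hFn : ‖F‖ ≤ 1 := by
    refine F.opNorm_le_bound zero_le_one (fun x => ?_)
    calc ‖F x‖ ≤ ‖f‖ * ‖(x : X)‖ := f.le_opNorm _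
    _ ≤ 1 * ‖x‖ := by
        apply mul_le_mul hfn le_rfl (norm_nonneg _) zero_le_one |>.trans
        simp
  have hFS : F ∈ StateSpace (⟨zm, hzmM⟩ : M) := ⟨hFn, hfzm1⟩
  have hz' : ‖(⟨zm, hzmM⟩ : M)‖ = 1 := hzm1
  have hd' : ‖(⟨zm, hzmM⟩ : M) - ⟨m, hm⟩‖ < δ := hzmd
  have := hδQP _ hz' hd' hFS
  exact ⟨hfn, this.2⟩
end
end

section
/- Let Ω be a compact Hausdorff space and X a real Banach space such that every very smooth point of X of norm one is a QP point of X. Then every very smooth point f of C(Ω, X) with ‖f‖ = 1 is a QP point of C(Ω, X). -/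
open Filter Topology Metric Set NormedSpace MeasureTheory

noncomputable section

set_option linter.unusedSectionVars false

/-- The dual, with the norm topology on the underlying space. -/
abbrev NDual (E : Type*) [NormedAddCommGroup E] [NormedSpace ℝ E] : Type _ := StrongDual ℝ E

section GenLim
variable {Y : Type*} [NormedAddCommGroup Y] [NormedSpace ℝ Y]

lemma exists_genLim {ι : Type*} (𝒰 : Ultrafilter ι) (v : ι → Y) (hv : ∀ i, ‖v i‖ ≤ 1) :
    ∃ G : StrongDual ℝ (StrongDual ℝ Y), ‖G‖ ≤ 1 ∧
      ∀ Λ : StrongDual ℝ Y, Tendsto (fun i => Λ (v i)) (𝒰 : Filter ι) (𝓝 (G Λ)) := by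
  have key : ∀ Λ : StrongDual ℝ Y, ∃ c : ℝ, Tendsto (fun i => Λ (v i)) (𝒰 : Filter ι) (𝓝 c) := by
    intro Λ
    have h1 : ∀ i, Λ (v i) ∈ Icc (-‖Λ‖) ‖Λ‖ := by
      intro i
      have h2 : |Λ (v i)| ≤ ‖Λ‖ := by
        calc |Λ (v i)| = ‖Λ (v i)‖ := rfl
          _ ≤ ‖Λ‖ * ‖v i‖ := Λ.le_opNorm _
          _ ≤ ‖Λ‖ * 1 := mul_le_mul_of_nonneg_left (hv i) (norm_nonneg Λ)
          _ = ‖Λ‖ := mul_one _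
      exact abs_le.mp h2
    obtain ⟨c, -, hc⟩ := (isCompact_Icc (a := -‖Λ‖) (b := ‖Λ‖)).ultrafilter_le_nhds
      (𝒰.map fun i => Λ (v i))
      (by
        rw [Ultrafilter.coe_map, le_principal_iff]
        exact mem_map.mpr (Eventually.of_forall h1))
    exact ⟨c, hc⟩
  choose g hg using key
  have gadd : ∀ Λ₁ Λ₂ : StrongDual ℝ Y, g (Λ₁ + Λ₂) = g Λ₁ + g Λ₂ := by
    intro Λ₁ Λ₂
    refine tendsto_nhds_unique (hg (Λ₁ + Λ₂)) ?_
    simpa using (hg Λ₁).add (hg Λ₂)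
  have gsmul : ∀ (c : ℝ) (Λ : StrongDual ℝ Y), g (c • Λ) = c * g Λ := by
    intro c Λ
    refine tendsto_nhds_unique (hg (c • Λ)) ?_
    simpa using (hg Λ).const_mul c
  have gbound : ∀ Λ : StrongDual ℝ Y, ‖g Λ‖ ≤ 1 * ‖Λ‖ := by
    intro Λ
    rw [one_mul]
    refine le_of_tendsto ((hg Λ).norm) (Eventually.of_forall fun i => ?_)
    calc ‖Λ (v i)‖ ≤ ‖Λ‖ * ‖v i‖ := Λ.le_opNorm _
      _ ≤ ‖Λ‖ * 1 := mul_le_mul_of_nonneg_left (hv i) (norm_nonneg Λ)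
      _ = ‖Λ‖ := mul_one _
  refine ⟨LinearMap.mkContinuous
    { toFun := g, map_add' := gadd, map_smul' := gsmul } 1 gbound,
    LinearMap.mkContinuous_norm_le _ zero_le_one _, hg⟩

def precompD {A B : Type*} [NormedAddCommGroup A] [NormedSpace ℝ A]
    [NormedAddCommGroup B] [NormedSpace ℝ B] (T : A →L[ℝ] B) :
    StrongDual ℝ B →L[ℝ] StrongDual ℝ A :=
  LinearMap.mkContinuous
    { toFun := fun φ => φ.comp T
      map_add' := by intro φ ψ; ext a; simp
      map_smul' := by intro c φ; ext a; simp }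
    ‖T‖ (fun φ => by
      calc ‖φ.comp T‖ ≤ ‖φ‖ * ‖T‖ := ContinuousLinearMap.opNorm_comp_le _ _
        _ = ‖T‖ * ‖φ‖ := mul_comm _ _)

@[simp] lemma precompD_apply {A B : Type*} [NormedAddCommGroup A] [NormedSpace ℝ A]
    [NormedAddCommGroup B] [NormedSpace ℝ B] (T : A →L[ℝ] B) (φ : StrongDual ℝ B) (a : A) :
    precompD T φ a = φ (T a) := rfl

lemma norm_precompD_le {A B : Type*} [NormedAddCommGroup A] [NormedSpace ℝ A]
    [NormedAddCommGroup B] [NormedSpace ℝ B] (T : A →L[ℝ] B) :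
    ‖precompD T‖ ≤ ‖T‖ :=
  LinearMap.mkContinuous_norm_le _ (norm_nonneg T) _

lemma norm_inclusionInDoubleDual_apply (x : Y) :
    ‖inclusionInDoubleDual ℝ Y x‖ = ‖x‖ :=
  (inclusionInDoubleDualLi ℝ (E := Y)).norm_map x

end GenLim

section CMap

variable {Ω : Type*} [TopologicalSpace Ω] [CompactSpace Ω] [T2Space Ω]
variable {X : Type*} [NormedAddCommGroup X] [NormedSpace ℝ X]

lemma norm_evalCLM_le (ω : Ω) : ‖(ContinuousMap.evalCLM ℝ ω : C(Ω,X) →L[ℝ] X)‖ ≤ 1 :=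
  ContinuousLinearMap.opNorm_le_bound _ zero_le_one fun g => by
    simpa using g.norm_coe_le_norm ω

/-- The functional `g ↦ x* (g ω)` on `C(Ω, X)`. -/
def lof (x' : StrongDual ℝ X) (ω : Ω) : StrongDual ℝ C(Ω, X) :=
  x'.comp (ContinuousMap.evalCLM ℝ ω)

@[simp] lemma lof_apply (x' : StrongDual ℝ X) (ω : Ω) (g : C(Ω,X)) : lof x' ω g = x' (g ω) := rfl

lemma norm_lof_le (x' : StrongDual ℝ X) (ω : Ω) : ‖lof x' ω‖ ≤ ‖x'‖ := by
  calc ‖lof x' ω‖ ≤ ‖x'‖ * ‖(ContinuousMap.evalCLM ℝ ω : C(Ω,X) →L[ℝ] X)‖ :=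
        ContinuousLinearMap.opNorm_comp_le _ _
    _ ≤ ‖x'‖ * 1 := mul_le_mul_of_nonneg_left (norm_evalCLM_le ω) (norm_nonneg x')
    _ = ‖x'‖ := mul_one _

lemma bump_cont (u : C(Ω,ℝ)) (x : X) : Continuous fun ω => u ω • x :=
  (map_continuous u).smul continuous_const

/-- `ω ↦ u ω • x` as a continuous map. -/
def bumpF (u : C(Ω,ℝ)) (x : X) : C(Ω,X) := ⟨fun ω => u ω • x, bump_cont u x⟩

@[simp] lemma bumpF_apply (u : C(Ω,ℝ)) (x : X) (ω : Ω) : bumpF u x ω = u ω • x := rfl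


open Classical in
/-- The indicator of an isolated point, as a continuous function. -/
def chiC (ω₀ : Ω) (hiso : IsOpen ({ω₀} : Set Ω)) : C(Ω, ℝ) :=
  ⟨fun ω => if ω = ω₀ then (1:ℝ) else 0, by
    apply Continuous.if ?_ continuous_const continuous_const
    intro a ha
    have h1 : ({x : Ω | x = ω₀} : Set Ω) = {ω₀} := by ext; simp
    rw [h1, (IsClopen.frontier_eq ⟨isClosed_singleton, hiso⟩)] at ha
    exact absurd ha (Set.notMem_empty a)⟩

lemma chiC_self (ω₀ : Ω) (hiso : IsOpen ({ω₀} : Set Ω)) : chiC ω₀ hiso ω₀ = 1 :=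
  if_pos rfl

lemma chiC_ne (ω₀ : Ω) (hiso : IsOpen ({ω₀} : Set Ω)) {ω : Ω} (h : ω ≠ ω₀) :
    chiC ω₀ hiso ω = 0 :=
  if_neg h

/-- Embedding of `X` into `C(Ω, X)` as maps supported at an isolated point. -/
def embE (ω₀ : Ω) (hiso : IsOpen ({ω₀} : Set Ω)) : X →L[ℝ] C(Ω, X) :=
  LinearMap.mkContinuous
    { toFun := fun x => bumpF (chiC ω₀ hiso) x
      map_add' := by
        intro x y; ext ω
        simp only [bumpF_apply, ContinuousMap.add_apply, smul_add]
      map_smul' := by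
        intro c x; ext ω
        simp only [bumpF_apply, ContinuousMap.smul_apply, RingHom.id_apply]
        rw [smul_comm] }
    1 (fun x => by
      show ‖bumpF (chiC ω₀ hiso) x‖ ≤ 1 * ‖x‖
      rw [one_mul]
      refine (ContinuousMap.norm_le _ (norm_nonneg x)).mpr fun ω => ?_
      simp only [bumpF_apply, norm_smul, Real.norm_eq_abs]
      by_cases h : ω = ω₀
      · rw [h, chiC_self]; simp
      · rw [chiC_ne ω₀ hiso h]; simp [norm_nonneg])

@[simp] lemma embE_apply (ω₀ : Ω) (hiso : IsOpen ({ω₀} : Set Ω)) (x : X) (ω : Ω) :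
    embE ω₀ hiso x ω = chiC ω₀ hiso ω • x := rfl

lemma embE_apply_self (ω₀ : Ω) (hiso : IsOpen ({ω₀} : Set Ω)) (x : X) :
    embE ω₀ hiso x ω₀ = x := by
  rw [embE_apply, chiC_self]; simp

lemma embE_apply_ne (ω₀ : Ω) (hiso : IsOpen ({ω₀} : Set Ω)) (x : X) {ω : Ω} (h : ω ≠ ω₀) :
    embE ω₀ hiso x ω = 0 := by
  rw [embE_apply, chiC_ne ω₀ hiso h]; simp

lemma norm_embE_le (ω₀ : Ω) (hiso : IsOpen ({ω₀} : Set Ω)) :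
    ‖(embE ω₀ hiso : X →L[ℝ] C(Ω,X))‖ ≤ 1 :=
  LinearMap.mkContinuous_norm_le _ zero_le_one _

lemma eval_embE (ω₀ : Ω) (hiso : IsOpen ({ω₀} : Set Ω)) (x : X) :
    (ContinuousMap.evalCLM ℝ ω₀ : C(Ω,X) →L[ℝ] X) (embE ω₀ hiso x) = x :=
  embE_apply_self ω₀ hiso x

end CMap


section Peak

variable {Ω : Type*} [TopologicalSpace Ω] [CompactSpace Ω] [T2Space Ω]
variable {X : Type*} [NormedAddCommGroup X] [NormedSpace ℝ X]

set_option maxHeartbeats 2000000 in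
set_option synthInstance.maxHeartbeats 400000 in
lemma exists_isolated_peak (f : C(Ω, X)) (hf1 : ‖f‖ = 1)
    (hf : VerySmoothPoint C(Ω, X) f) :
    ∃ ω₀ : Ω, IsOpen {ω₀} ∧ ‖f ω₀‖ = 1 ∧ (∀ ω, ω ≠ ω₀ → ‖f ω‖ < 1) ∧
      VerySmoothPoint X (f ω₀) := by
  classical
  -- Ω is nonempty
  have hne : Nonempty Ω := by
    by_contra h
    rw [not_nonempty_iff] at h
    have : f = 0 := by ext ω; exact (h.false ω).elim
    rw [this] at hf1; simp at hf1
  -- the peak point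
  obtain ⟨ω₀, -, hmax'⟩ := isCompact_univ.exists_isMaxOn univ_nonempty
    ((map_continuous f).norm.continuousOn)
  have hmax : ∀ ω, ‖f ω‖ ≤ ‖f ω₀‖ := fun ω => hmax' (mem_univ ω)
  have hub : ∀ ω, ‖f ω‖ ≤ 1 := fun ω => hf1 ▸ f.norm_coe_le_norm ω
  have hω₀ : ‖f ω₀‖ = 1 := by
    refine le_antisymm (hub ω₀) ?_
    rw [← hf1]
    exact (f.norm_le (norm_nonneg _)).mpr hmax
  set x₀ : X := f ω₀ with hx₀def
  have hx₀ne : x₀ ≠ 0 := fun h => by rw [h] at hω₀; simp at hω₀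
  obtain ⟨x₀', hx₀'n, hx₀'⟩ := exists_dual_vector ℝ x₀ (norm_ne_zero_iff.mpr hx₀ne)
  have hx₀'v : x₀' x₀ = 1 := by rw [hx₀']; exact_mod_cast congrArg _ hω₀
  -- the canonical norming functional
  set Λ₀ : StrongDual ℝ C(Ω, X) := lof x₀' ω₀ with hΛ₀def
  have hΛ₀f : Λ₀ f = 1 := by simp [hΛ₀def, ← hx₀def, hx₀'v]
  have hΛ₀n : ‖Λ₀‖ = 1 := by
    refine le_antisymm (by simpa [hx₀'n] using norm_lof_le x₀' ω₀ (X := X)) ?_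
    have := Λ₀.le_opNorm f
    rw [hΛ₀f, hf1, mul_one] at this
    simpa using this
  -- uniqueness of the norming functional
  obtain ⟨⟨-, Λu, hΛu, huniq⟩, hfbd⟩ := hf
  have key : ∀ Λ : StrongDual ℝ C(Ω,X), ‖Λ‖ = 1 → Λ f = 1 → Λ = Λ₀ := by
    intro Λ h1 h2
    rw [huniq Λ ⟨h1, by rw [hf1]; exact h2⟩, ← huniq Λ₀ ⟨hΛ₀n, by rw [hf1]; exact hΛ₀f⟩]
  -- uniqueness of the peak point
  have hpeak : ∀ ω, ω ≠ ω₀ → ‖f ω‖ < 1 := by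
    intro ω₁ hne1
    rcases lt_or_eq_of_le (hub ω₁) with h | h
    · exact h
    · exfalso
      have hx₁ne : f ω₁ ≠ 0 := fun hz => by rw [hz] at h; simp at h
      obtain ⟨x₁', hx₁'n, hx₁'⟩ := exists_dual_vector ℝ (f ω₁) (norm_ne_zero_iff.mpr hx₁ne)
      have hx₁'v : x₁' (f ω₁) = 1 := by rw [hx₁', h]; norm_num
      set Λ₁ : StrongDual ℝ C(Ω, X) := lof x₁' ω₁ with hΛ₁def
      have hΛ₁f : Λ₁ f = 1 := by simp [hΛ₁def, hx₁'v]
      have hΛ₁n : ‖Λ₁‖ = 1 := by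
        refine le_antisymm (by simpa [hx₁'n] using norm_lof_le x₁' ω₁ (X := X)) ?_
        have := Λ₁.le_opNorm f
        rw [hΛ₁f, hf1, mul_one] at this
        simpa using this
      have hΛeq : Λ₁ = Λ₀ := key Λ₁ hΛ₁n hΛ₁f
      -- Urysohn separation
      obtain ⟨u, hu0, hu1, -⟩ := exists_continuous_zero_one_of_isClosed
        (isClosed_singleton (x := ω₀)) (isClosed_singleton (x := ω₁))
        (by simp [Set.disjoint_singleton, Ne.symm hne1])
      have h0 : Λ₀ (bumpF u (f ω₁)) = 0 := by
        have : u ω₀ = 0 := hu0 rfl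
        simp [hΛ₀def, this]
      have h1' : Λ₁ (bumpF u (f ω₁)) = 1 := by
        have : u ω₁ = 1 := hu1 rfl
        simp [hΛ₁def, this, hx₁'v]
      rw [hΛeq, h0] at h1'
      exact zero_ne_one h1'
  -- isolation of the peak point
  have hiso : IsOpen ({ω₀} : Set Ω) := by
    by_contra hni
    -- the punctured neighborhood filter is nontrivial
    have hcl : ω₀ ∈ closure ({ω₀}ᶜ : Set Ω) := by
      by_contra hc
      apply hni
      have hset : ({ω₀} : Set Ω) = (closure ({ω₀}ᶜ : Set Ω))ᶜ := by
        ext x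
        simp only [Set.mem_singleton_iff, Set.mem_compl_iff]
        constructor
        · rintro rfl; exact hc
        · intro hx
          by_contra hxne
          exact hx (subset_closure hxne)
      rw [hset]
      exact isClosed_closure.isOpen_compl
    have hNB : (𝓝[≠] ω₀).NeBot := mem_closure_iff_nhdsWithin_neBot.mp hcl
    obtain ⟨𝒰, h𝒰⟩ := Filter.exists_ultrafilter_le (𝓝[≠] ω₀)
    -- the limit functional along ω → ω₀, ω ≠ ω₀
    obtain ⟨F, hFn, hF⟩ := exists_genLim 𝒰 (fun ω => lof x₀' ω)
      (fun ω => by simpa [hx₀'n] using norm_lof_le x₀' ω (X := X))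
    -- shrinking bump functions
    let ι := {U : Set Ω // IsOpen U ∧ ω₀ ∈ U}
    let tail : ι → Set ι := fun V => {U : ι | U.1 ⊆ V.1}
    let F₀ : Filter ι := ⨅ V : ι, Filter.principal (tail V)
    haveI hι : Nonempty ι := ⟨⟨Set.univ, isOpen_univ, Set.mem_univ ω₀⟩⟩
    have hdir : Directed (· ≥ ·) (fun V : ι => Filter.principal (tail V)) := by
      intro V₁ V₂
      refine ⟨⟨V₁.1 ∩ V₂.1, V₁.2.1.inter V₂.2.1, ⟨V₁.2.2, V₂.2.2⟩⟩, ?_, ?_⟩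
      · exact Filter.principal_mono.mpr fun U hU => hU.trans Set.inter_subset_left
      · exact Filter.principal_mono.mpr fun U hU => hU.trans Set.inter_subset_right
    haveI hF₀ : F₀.NeBot := Filter.iInf_neBot_of_directed hdir
      (fun V => Filter.principal_neBot_iff.mpr ⟨V, fun _ h => h⟩)
    obtain ⟨𝒱, h𝒱⟩ := Filter.exists_ultrafilter_le F₀
    -- Urysohn bumps
    have hbump : ∀ U : ι, ∃ u : C(Ω, ℝ),
        (∀ ω ∉ U.1, u ω = 0) ∧ u ω₀ = 1 ∧ ∀ ω, u ω ∈ Set.Icc (0:ℝ) 1 := by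
      intro U
      obtain ⟨u, h0, h1, hI⟩ := exists_continuous_zero_one_of_isClosed
        (U.2.1.isClosed_compl) (isClosed_singleton (x := ω₀))
        (by
          rw [Set.disjoint_left]
          rintro a ha rfl
          exact ha U.2.2)
      exact ⟨u, fun ω hω => h0 hω, h1 rfl, hI⟩
    choose uB huB0 huB1 huBI using hbump
    obtain ⟨G, hGn, hG⟩ := exists_genLim 𝒱 (fun U => bumpF (uB U) x₀)
      (fun U => by
        refine (ContinuousMap.norm_le _ zero_le_one).mpr fun ω => ?_
        have := huBI U ω
        simp only [bumpF_apply, norm_smul, Real.norm_eq_abs, hω₀]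
        rw [abs_of_nonneg this.1]
        simpa using this.2)
    -- G Λ₀ = 1
    have hGΛ₀ : G Λ₀ = 1 := by
      refine tendsto_nhds_unique (hG Λ₀) ?_
      have : (fun U : ι => Λ₀ (bumpF (uB U) x₀)) = fun _ => 1 := by
        funext U
        simp [hΛ₀def, huB1 U, hx₀'v]
      rw [this]
      exact tendsto_const_nhds
    -- G (lof x₀' ω) = 0 for ω ≠ ω₀
    have hGω : ∀ ω, ω ≠ ω₀ → G (lof x₀' ω) = 0 := by
      intro ω hωne
      refine tendsto_nhds_unique (hG (lof x₀' ω)) ?_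
      have hev : ∀ᶠ U : ι in 𝒱, lof x₀' ω (bumpF (uB U) x₀) = 0 := by
        have hmem : tail ⟨{ω}ᶜ, isOpen_compl_singleton, by simp [Ne.symm hωne]⟩ ∈ F₀ :=
          Filter.mem_iInf_of_mem _ (Filter.mem_principal_self _)
        filter_upwards [h𝒱 hmem] with U hU
        have hω : ω ∉ U.1 := fun hωU => (hU hωU) rfl
        simp [huB0 U ω hω]
      exact (tendsto_congr' hev).mpr tendsto_const_nhds
    -- F (ĵ f) = 1
    set jf := inclusionInDoubleDual ℝ C(Ω,X) f with hjfdef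
    have hjfn : ‖jf‖ = 1 := by rw [hjfdef, norm_inclusionInDoubleDual_apply, hf1]
    have hFjf : F jf = 1 := by
      refine tendsto_nhds_unique (hF jf) ?_
      have : (fun ω => jf (lof x₀' ω)) = fun ω => x₀' (f ω) := by
        funext ω; simp [hjfdef, dual_def]
      rw [this]
      have hcont : Tendsto (fun ω => x₀' (f ω)) (𝓝 ω₀) (𝓝 (x₀' (f ω₀))) :=
        (x₀'.continuous.comp (map_continuous f)).tendsto ω₀
      rw [← hx₀def, hx₀'v] at hcont
      exact hcont.mono_left (h𝒰.trans nhdsWithin_le_nhds)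
    have hFn1 : ‖F‖ = 1 := by
      refine le_antisymm hFn ?_
      have := F.le_opNorm jf
      rw [hFjf, hjfn, mul_one] at this
      simpa using this
    -- the canonical image of Λ₀ in the third dual
    set J := inclusionInDoubleDual ℝ (StrongDual ℝ C(Ω,X)) Λ₀ with hJdef
    have hJn : ‖J‖ = 1 := by rw [hJdef, norm_inclusionInDoubleDual_apply, hΛ₀n]
    have hJjf : J jf = 1 := by rw [hJdef, dual_def, hjfdef, dual_def, hΛ₀f]
    -- uniqueness in the bidual
    obtain ⟨-, Ξ, hΞ, hΞuniq⟩ := hfbd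
    have hFeq : F = J := by
      rw [hΞuniq F ⟨hFn1, by show F jf = ‖jf‖; rw [hjfn, hFjf]⟩,
        ← hΞuniq J ⟨hJn, by show J jf = ‖jf‖; rw [hjfn, hJjf]⟩]
    -- contradiction
    have hFG : F G = 0 := by
      refine tendsto_nhds_unique (hF G) ?_
      have hev : ∀ᶠ ω in (𝒰 : Filter Ω), G (lof x₀' ω) = 0 := by
        have hmem : {ω : Ω | ω ≠ ω₀} ∈ (𝒰 : Filter Ω) :=
          h𝒰 self_mem_nhdsWithin
        filter_upwards [hmem] with ω hω
        exact hGω ω hω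
      exact (tendsto_congr' (hev.mono fun ω h => h)).mpr tendsto_const_nhds
    have hJG : J G = 1 := by rw [hJdef, dual_def, hGΛ₀]
    rw [hFeq, hJG] at hFG
    exact one_ne_zero hFG
  -- smoothness of x₀
  have hsmx₀ : SmoothPoint X x₀ := by
    refine ⟨hx₀ne, x₀', ⟨hx₀'n, hx₀'⟩, ?_⟩
    rintro y' ⟨hy'n, hy'v⟩
    have hy'1 : y' x₀ = 1 := by rw [hy'v, hω₀]
    have hΛy : lof y' ω₀ = Λ₀ := by
      apply key
      · refine le_antisymm (by simpa [hy'n] using norm_lof_le y' ω₀ (X := X)) ?_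
        have h := (lof y' ω₀).le_opNorm f
        rw [lof_apply, ← hx₀def, hy'1, hf1, mul_one] at h
        simpa using h
      · simp [← hx₀def, hy'1]
    ext x
    have h := congrArg (fun Λ : StrongDual ℝ C(Ω,X) => Λ (ContinuousMap.const Ω x)) hΛy
    simpa [hΛ₀def] using h
  -- very smoothness of x₀
  refine ⟨ω₀, hiso, hω₀, hpeak, hsmx₀, ?_⟩
  obtain ⟨-, Ξ, hΞ, hΞuniq⟩ := hfbd
  set jf := inclusionInDoubleDual ℝ C(Ω,X) f with hjfdef
  have hjfn : ‖jf‖ = 1 := by rw [hjfdef, norm_inclusionInDoubleDual_apply, hf1]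
  set jx₀ := inclusionInDoubleDual ℝ X x₀ with hjx₀def
  have hjx₀n : ‖jx₀‖ = 1 := by rw [hjx₀def, norm_inclusionInDoubleDual_apply, hω₀]
  set r : C(Ω,X) →L[ℝ] X := ContinuousMap.evalCLM ℝ ω₀ with hrdef
  set e : X →L[ℝ] C(Ω,X) := embE ω₀ hiso with hedef
  set rdd : NDual (NDual C(Ω,X)) →L[ℝ] NDual (NDual X) := precompD (precompD r)
    with hrdddef
  set edd : NDual (NDual X) →L[ℝ] NDual (NDual C(Ω,X)) := precompD (precompD e)
    with hedddef
  have hrddn : ‖rdd‖ ≤ 1 := by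
    refine (norm_precompD_le _).trans ((norm_precompD_le r).trans ?_)
    exact norm_evalCLM_le ω₀
  have hrddjf : rdd jf = jx₀ := by
    ext x'
    simp only [hrdddef, precompD_apply, hjfdef, hjx₀def, dual_def]
    rfl
  have hredd : ∀ ξ : StrongDual ℝ (StrongDual ℝ X), rdd (edd ξ) = ξ := by
    intro ξ
    ext x'
    simp only [hrdddef, hedddef, precompD_apply]
    congr 1
    ext x
    simp only [precompD_apply, ContinuousLinearMap.comp_apply]
    rw [hedef, hrdef]
    exact congrArg x' (eval_embE ω₀ hiso x)
  -- the transfer of norming functionals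
  have transfer : ∀ φ : NDual (NDual (NDual X)), ‖φ‖ = 1 → φ jx₀ = 1 →
      ‖φ.comp rdd‖ = 1 ∧ (φ.comp rdd) jf = ‖jf‖ := by
    intro φ hφn hφv
    have hval : (φ.comp rdd) jf = 1 := by
      rw [ContinuousLinearMap.comp_apply, hrddjf]; exact hφv
    constructor
    · refine le_antisymm ?_ ?_
      · calc ‖φ.comp rdd‖ ≤ ‖φ‖ * ‖rdd‖ := ContinuousLinearMap.opNorm_comp_le _ _
          _ ≤ 1 * 1 := by
              apply mul_le_mul (le_of_eq hφn) hrddn (ContinuousLinearMap.opNorm_nonneg _) zero_le_one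
          _ = 1 := one_mul 1
      · have h := (φ.comp rdd).le_opNorm jf
        rw [hval, hjfn, mul_one] at h
        simpa using h
    · rw [hval, hjfn]
  constructor
  · intro h
    rw [h] at hjx₀n
    rw [ContinuousLinearMap.opNorm_zero] at hjx₀n
    exact zero_ne_one hjx₀n
  -- existence of a norming functional
  refine ⟨inclusionInDoubleDual ℝ (StrongDual ℝ X) x₀',
    ⟨by rw [norm_inclusionInDoubleDual_apply, hx₀'n],
     by rw [dual_def, hjx₀n, hjx₀def, dual_def]; exact hx₀'v⟩, ?_⟩
  rintro ψ ⟨hψn, hψv⟩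
  set φ₀ := inclusionInDoubleDual ℝ (StrongDual ℝ X) x₀' with hφ₀def
  have hφ₀n : ‖φ₀‖ = 1 := by rw [hφ₀def, norm_inclusionInDoubleDual_apply, hx₀'n]
  have hφ₀v : φ₀ jx₀ = 1 := by rw [hφ₀def, dual_def, hjx₀def, dual_def, hx₀'v]
  have hψ1 : ψ jx₀ = 1 := by rw [hψv, hjx₀n]
  have hψ' := transfer ψ hψn hψ1
  have hφ' := transfer φ₀ hφ₀n hφ₀v
  have hcomp : ψ.comp rdd = φ₀.comp rdd := by
    rw [hΞuniq _ ⟨hψ'.1, hψ'.2⟩, ← hΞuniq _ ⟨hφ'.1, hφ'.2⟩]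
  ext ξ
  have h := congrArg (fun Φ : NDual (NDual (NDual C(Ω,X))) => Φ (edd ξ)) hcomp
  simpa [ContinuousLinearMap.comp_apply, hredd ξ] using h

end Peak

set_option maxHeartbeats 1000000 in
theorem qp_point_of_very_smooth_continuousMap
    {Ω : Type*} [TopologicalSpace Ω] [CompactSpace Ω] [T2Space Ω]
    {X : Type*} [NormedAddCommGroup X] [NormedSpace ℝ X] [CompleteSpace X]
    (hX : ∀ x : X, ‖x‖ = 1 → VerySmoothPoint X x → QPPoint X x)
    (f : C(Ω, X)) (hf1 : ‖f‖ = 1) (hf : VerySmoothPoint C(Ω, X) f) :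
    QPPoint C(Ω, X) f := by
  classical
  obtain ⟨ω₀, hiso, hω₀, hpeak, hvs⟩ := exists_isolated_peak f hf1 hf
  obtain ⟨δ₀, hδ₀pos, hδ₀⟩ := hX (f ω₀) hω₀ hvs
  have hne : Nonempty Ω := ⟨ω₀⟩
  -- a uniform gap away from the peak point
  obtain ⟨ε, hεpos, hε1, hεgap⟩ :
      ∃ ε : ℝ, 0 < ε ∧ ε ≤ 1 ∧ ∀ ω, ω ≠ ω₀ → ‖f ω‖ ≤ 1 - ε := by
    by_cases hK : ∃ ω : Ω, ω ≠ ω₀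
    · have hKc : IsCompact ({ω₀}ᶜ : Set Ω) := hiso.isClosed_compl.isCompact
      obtain ⟨ω₂, hω₂, hmax⟩ := hKc.exists_isMaxOn
        (by obtain ⟨ω, hω⟩ := hK; exact ⟨ω, hω⟩)
        ((map_continuous f).norm.continuousOn)
      refine ⟨1 - ‖f ω₂‖, by linarith [hpeak ω₂ hω₂], by
          have := norm_nonneg (f ω₂); linarith, ?_⟩
      intro ω hω
      have := hmax (a := ω) hω
      simpa using this
    · push_neg at hK
      exact ⟨1, one_pos, le_refl 1, fun ω hω => absurd (hK ω) hω⟩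
  set δ : ℝ := min δ₀ (ε / 2) with hδdef
  have hδpos : 0 < δ := lt_min hδ₀pos (by linarith)
  refine ⟨δ, hδpos, ?_⟩
  intro g hg1 hgf Λ hΛ
  obtain ⟨hΛn, hΛg⟩ := hΛ
  have hgfp : ∀ ω : Ω, ‖g ω - f ω‖ < δ := by
    intro ω
    calc ‖g ω - f ω‖ = ‖(g - f) ω‖ := by simp
      _ ≤ ‖g - f‖ := (g - f).norm_coe_le_norm ω
      _ < δ := hgf
  -- g is small away from ω₀
  have hgsmall : ∀ ω, ω ≠ ω₀ → ‖g ω‖ ≤ 1 - ε / 2 := by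
    intro ω hω
    have h1 : ‖g ω‖ ≤ ‖f ω‖ + ‖g ω - f ω‖ := by
      calc ‖g ω‖ = ‖f ω + (g ω - f ω)‖ := by
            rw [show f ω + (g ω - f ω) = g ω from by abel]
        _ ≤ ‖f ω‖ + ‖g ω - f ω‖ := norm_add_le _ _
    have h2 := hεgap ω hω
    have h3 := hgfp ω
    have h4 : δ ≤ ε / 2 := min_le_right _ _
    linarith
  -- g attains its norm at ω₀
  have hgω₀ : ‖g ω₀‖ = 1 := by
    refine le_antisymm (hg1 ▸ g.norm_coe_le_norm ω₀) ?_
    obtain ⟨ωm, -, hmax'⟩ := isCompact_univ.exists_isMaxOn univ_nonempty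
      ((map_continuous g).norm.continuousOn)
    have hmax : ∀ ω, ‖g ω‖ ≤ ‖g ωm‖ := fun ω => hmax' (Set.mem_univ ω)
    have hgm : ‖g ωm‖ = 1 := by
      refine le_antisymm (hg1 ▸ g.norm_coe_le_norm ωm) ?_
      rw [← hg1]
      exact (g.norm_le (norm_nonneg _)).mpr hmax
    by_cases hm : ωm = ω₀
    · rw [← hm, hgm]
    · exfalso
      have := hgsmall ωm hm
      rw [hgm] at this
      linarith
  -- g ω₀ is close to f ω₀
  have hclose : ‖g ω₀ - f ω₀‖ < δ₀ := (hgfp ω₀).trans_le (min_le_left _ _)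
  have hsub := hδ₀ (g ω₀) hgω₀ hclose
  -- decompose Λ
  set e : X →L[ℝ] C(Ω,X) := embE ω₀ hiso with hedef
  set x' : StrongDual ℝ X := Λ.comp e with hx'def
  set Λ' : StrongDual ℝ C(Ω,X) := Λ - lof x' ω₀ with hΛ'def
  have hΛ'e : ∀ x : X, Λ' (e x) = 0 := by
    intro x
    have h1 : (e x) ω₀ = x := embE_apply_self ω₀ hiso x
    simp only [hΛ'def, ContinuousLinearMap.sub_apply, lof_apply, h1]
    simp [hx'def]
  have hΛsplit : ∀ z : C(Ω,X), Λ z = x' (z ω₀) + Λ' z := by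
    intro z
    simp only [hΛ'def, ContinuousLinearMap.sub_apply, lof_apply]
    ring
  -- vanishing-at-ω₀ elements with norm control
  have hx'n : ‖x'‖ ≤ 1 := by
    calc ‖x'‖ ≤ ‖Λ‖ * ‖e‖ := ContinuousLinearMap.opNorm_comp_le _ _
      _ ≤ 1 * 1 := mul_le_mul hΛn (norm_embE_le ω₀ hiso) (norm_nonneg _) zero_le_one
      _ = 1 := one_mul 1
  -- the L¹ estimate : ‖x'‖ + ‖Λ'‖ ≤ 1
  have hsum : ‖x'‖ + ‖Λ'‖ ≤ 1 := by
    refine le_of_forall_lt fun c hc => ?_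
    set η : ℝ := (‖x'‖ + ‖Λ'‖ - c) / 2 with hηdef
    have hηpos : 0 < η := by simp only [hηdef]; linarith
    have ha : ‖x'‖ - η < ‖x'‖ := by linarith
    have hb : ‖Λ'‖ - η < ‖Λ'‖ := by linarith
    obtain ⟨x, hxn, hxv⟩ := x'.exists_lt_apply_of_lt_opNorm ha
    obtain ⟨y, hyn, hyv⟩ := Λ'.exists_lt_apply_of_lt_opNorm hb
    set x2 : X := if 0 ≤ x' x then x else -x with hx2def
    have hx2n : ‖x2‖ ≤ 1 := by
      simp only [hx2def]
      split <;> simpa using le_of_lt hxn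
    have hx2v : ‖x'‖ - η < x' x2 := by
      simp only [hx2def]
      rcases le_or_gt 0 (x' x) with h | h
      · rw [if_pos h]
        rwa [Real.norm_eq_abs, abs_of_nonneg h] at hxv
      · rw [if_neg (not_le.mpr h)]
        rw [map_neg]
        rwa [Real.norm_eq_abs, abs_of_neg h] at hxv
    set h0 : C(Ω,X) := y - e (y ω₀) with hh0def
    have hh0ω₀ : h0 ω₀ = 0 := by
      simp [hh0def, hedef, embE_apply_self ω₀ hiso]
    have hh0val : ∀ ω, ω ≠ ω₀ → h0 ω = y ω := by
      intro ω hω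
      simp [hh0def, hedef, embE_apply_ne ω₀ hiso _ hω]
    have hΛ'h0 : Λ' h0 = Λ' y := by
      simp only [hh0def, map_sub]
      rw [hΛ'e (y ω₀)]
      ring
    have hh0n : ‖h0‖ ≤ 1 := by
      refine (h0.norm_le zero_le_one).mpr fun ω => ?_
      by_cases hω : ω = ω₀
      · rw [hω, hh0ω₀]; simp
      · rw [hh0val ω hω]
        exact (y.norm_coe_le_norm ω).trans (le_of_lt hyn)
    set h2 : C(Ω,X) := if 0 ≤ Λ' h0 then h0 else -h0 with hh2def
    have hh2ω₀ : h2 ω₀ = 0 := by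
      simp only [hh2def]
      split
      · exact hh0ω₀
      · simp [hh0ω₀]
    have hh2n : ‖h2‖ ≤ 1 := by
      simp only [hh2def]; split
      · exact hh0n
      · simpa using hh0n
    have hΛ'h0abs : ‖Λ'‖ - η < |Λ' h0| := by
      rw [hΛ'h0, ← Real.norm_eq_abs]; exact hyv
    have hh2v : ‖Λ'‖ - η < Λ' h2 := by
      simp only [hh2def]
      rcases le_or_gt 0 (Λ' h0) with h | h
      · rw [if_pos h]
        calc ‖Λ'‖ - η < |Λ' h0| := hΛ'h0abs
          _ = Λ' h0 := abs_of_nonneg h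
      · rw [if_neg (not_le.mpr h), map_neg]
        calc ‖Λ'‖ - η < |Λ' h0| := hΛ'h0abs
          _ = -(Λ' h0) := abs_of_neg h
    -- assemble
    set z : C(Ω,X) := e x2 + h2 with hzdef
    have hzn : ‖z‖ ≤ 1 := by
      refine (z.norm_le zero_le_one).mpr fun ω => ?_
      by_cases hω : ω = ω₀
      · have : z ω = x2 := by
          simp [hzdef, hω, hedef, embE_apply_self ω₀ hiso, hh2ω₀]
        rw [this]; exact hx2n
      · have : z ω = h2 ω := by
          simp [hzdef, hedef, embE_apply_ne ω₀ hiso _ hω]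
        rw [this]
        exact (h2.norm_coe_le_norm ω).trans hh2n
    have hΛz : Λ z = x' x2 + Λ' h2 := by
      have h1 : z ω₀ = x2 := by
        simp [hzdef, hedef, embE_apply_self ω₀ hiso, hh2ω₀]
      rw [hΛsplit z, h1]
      have : Λ' z = Λ' h2 := by
        simp only [hzdef, map_add]
        rw [hΛ'e x2]
        ring
      rw [this]
    have hfinal : c < Λ z := by
      rw [hΛz]
      have : c = (‖x'‖ - η) + (‖Λ'‖ - η) := by simp only [hηdef]; ring
      rw [this]
      exact add_lt_add hx2v hh2v
    calc c < Λ z := hfinal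
      _ ≤ ‖Λ z‖ := le_abs_self _
      _ ≤ ‖Λ‖ * ‖z‖ := Λ.le_opNorm z
      _ ≤ 1 * 1 := mul_le_mul hΛn hzn (norm_nonneg _) zero_le_one
      _ = 1 := one_mul 1
  -- the function g minus its peak part
  set h : C(Ω,X) := g - e (g ω₀) with hhdef
  have hhω₀ : h ω₀ = 0 := by simp [hhdef, hedef, embE_apply_self ω₀ hiso]
  have hhn : ‖h‖ ≤ 1 - ε / 2 := by
    refine (h.norm_le (by linarith)).mpr fun ω => ?_
    by_cases hω : ω = ω₀
    · rw [hω, hhω₀]; simp; linarith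
    · have : h ω = g ω := by simp [hhdef, hedef, embE_apply_ne ω₀ hiso _ hω]
      rw [this]
      exact hgsmall ω hω
  have hΛ'g : Λ' g = Λ' h := by
    simp only [hhdef, map_sub]
    rw [hΛ'e (g ω₀)]
    ring
  -- main estimate : Λ' must vanish
  have hest : 1 ≤ ‖x'‖ + ‖Λ'‖ * (1 - ε / 2) := by
    have h1 : Λ g = x' (g ω₀) + Λ' h := by rw [hΛsplit g, hΛ'g]
    have h2 : x' (g ω₀) ≤ ‖x'‖ := by
      calc x' (g ω₀) ≤ ‖x' (g ω₀)‖ := le_abs_self _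
        _ ≤ ‖x'‖ * ‖g ω₀‖ := x'.le_opNorm _
        _ = ‖x'‖ := by rw [hgω₀, mul_one]
    have h3 : Λ' h ≤ ‖Λ'‖ * (1 - ε / 2) := by
      calc Λ' h ≤ ‖Λ' h‖ := le_abs_self _
        _ ≤ ‖Λ'‖ * ‖h‖ := Λ'.le_opNorm _
        _ ≤ ‖Λ'‖ * (1 - ε / 2) := mul_le_mul_of_nonneg_left hhn (norm_nonneg _)
    rw [hΛg] at h1
    linarith
  have hΛ'0 : ‖Λ'‖ = 0 := by
    have h1 : ‖Λ'‖ * (ε / 2) ≤ 0 := by linarith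
    have h2 : 0 ≤ ‖Λ'‖ * (ε / 2) := mul_nonneg (norm_nonneg _) (by linarith)
    have h3 : ‖Λ'‖ * (ε / 2) = 0 := le_antisymm h1 h2
    rcases mul_eq_zero.mp h3 with h | h
    · exact h
    · exfalso; linarith
  have hΛ'zero : Λ' = 0 := norm_eq_zero.mp hΛ'0
  -- conclude
  have hx'g : x' (g ω₀) = 1 := by
    have := hΛsplit g
    rw [hΛg, hΛ'zero] at this
    simpa using this.symm
  have hx'mem : x' ∈ StateSpace (g ω₀) := ⟨hx'n, hx'g⟩
  have hx'x₀ : x' (f ω₀) = 1 := (hsub hx'mem).2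
  refine ⟨hΛn, ?_⟩
  have := hΛsplit f
  rw [hΛ'zero] at this
  simpa [hx'x₀] using this
end
end

section
/- Let x ∈ c₀ be a smooth point. Then there exists a positive integer n such that |x(n)| = ‖x‖ and |x(m)| < ‖x‖ for all m ≠ n, and consequently c₀ = span{eₙ} ⊕_∞ M where eₙ is the n-th unit vector and M = {y ∈ c₀ : y(n) = 0}, with dist(x, span{eₙ}) < ‖x‖. -/
open Filter Topology Metric Set NormedSpace MeasureTheory

noncomputable section

/-- The space `c₀` of real sequences converging to `0`, with the supremum norm. -/
abbrev c₀ : Type := ZeroAtInftyContinuousMap ℕ ℝ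

/-- The `n`-th standard unit vector of `c₀`. -/
def unitVec (n : ℕ) : c₀ where
  toFun := fun m => if m = n then 1 else 0
  continuous_toFun := continuous_of_discreteTopology
  zero_at_infty' := by
    refine tendsto_nhds_of_eventually_eq ?_
    filter_upwards [isCompact_singleton (x := n) |>.compl_mem_cocompact] with m hm
    simp only [Set.mem_compl_iff, Set.mem_singleton_iff] at hm
    simp [hm]

/-- The subspace of sequences of `c₀` vanishing at the coordinate `n`. -/
def coordZero (n : ℕ) : Submodule ℝ c₀ where
  carrier := {y : c₀ | y n = 0}
  add_mem' := fun {f g} hf hg => by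
    simp only [Set.mem_setOf_eq] at *
    simp [hf, hg]
  zero_mem' := by simp
  smul_mem' := fun c f hf => by
    simp only [Set.mem_setOf_eq] at *
    simp [hf]


section Helpers

lemma c0_abs_le (y : c₀) (m : ℕ) : |y m| ≤ ‖y‖ := by
  rw [← ZeroAtInftyContinuousMap.norm_toBCF_eq_norm]
  exact y.toBCF.norm_coe_le_norm m

lemma c0_norm_le (y : c₀) (C : ℝ) (hC : 0 ≤ C) (h : ∀ m, |y m| ≤ C) : ‖y‖ ≤ C := by
  rw [← ZeroAtInftyContinuousMap.norm_toBCF_eq_norm]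
  exact BoundedContinuousFunction.norm_le hC |>.mpr h

lemma c0_finite (y : c₀) (c : ℝ) (hc : 0 < c) : {m : ℕ | c ≤ |y m|}.Finite := by
  have h := y.zero_at_infty'
  rw [cocompact_eq_cofinite] at h
  have h2 := Metric.tendsto_nhds.mp h c hc
  rw [Filter.eventually_cofinite] at h2
  refine h2.subset ?_
  intro m hm hlt
  rw [Real.dist_eq, sub_zero] at hlt
  have hm' : c ≤ |y m| := hm
  exact absurd hlt hm'.not_gt

def evalL (n : ℕ) : c₀ →L[ℝ] ℝ :=
  LinearMap.mkContinuous
    { toFun := fun y => y n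
      map_add' := fun f g => by simp
      map_smul' := fun c f => by simp }
    1 (fun y => by simpa using c0_abs_le y n)

@[simp] lemma evalL_apply (n : ℕ) (y : c₀) : evalL n y = y n := rfl

end Helpers

@[simp] lemma unitVec_apply (n m : ℕ) : unitVec n m = if m = n then 1 else 0 := rfl

lemma norm_unitVec (n : ℕ) : ‖unitVec n‖ = 1 := by
  apply le_antisymm
  · apply c0_norm_le _ _ zero_le_one
    intro m
    by_cases h : m = n <;> simp [h]
  · have := c0_abs_le (unitVec n) n
    simpa using this

lemma norm_evalL (n : ℕ) : ‖evalL n‖ = 1 := by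
  apply le_antisymm (LinearMap.mkContinuous_norm_le _ zero_le_one _)
  have h := (evalL n).le_opNorm (unitVec n)
  rw [norm_unitVec, mul_one] at h
  simp at h
  exact h

/-- the sign-scaled evaluation functional attains the norm at `x` when `|x n| = ‖x‖`. -/
lemma exists_attaining (x : c₀) (n : ℕ) (hxn : x n ≠ 0) (h : |x n| = ‖x‖) :
    ∃ f : StrongDual ℝ c₀, (‖f‖ = 1 ∧ f x = ‖x‖) ∧ ∀ m, f (unitVec m) = if m = n then Real.sign (x n) else 0 := by
  refine ⟨Real.sign (x n) • evalL n, ⟨?_, ?_⟩, ?_⟩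
  · rcases Real.sign_apply_eq_of_ne_zero _ hxn with hs | hs
    · rw [hs, show ((-1 : ℝ) • evalL n : StrongDual ℝ c₀) = -evalL n by ext y; simp]
      exact (norm_neg (evalL n)).trans (norm_evalL n)
    · rw [hs, one_smul, norm_evalL]
  · rw [← h]
    simp only [ContinuousLinearMap.smul_apply, evalL_apply, smul_eq_mul]
    rcases lt_trichotomy (x n) 0 with hl | hl | hl
    · rw [Real.sign_of_neg hl, abs_of_neg hl]; ring
    · exact absurd hl hxn
    · rw [Real.sign_of_pos hl, abs_of_pos hl]; ring
  · intro m
    by_cases hm : m = n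
    · simp [hm]
    · simp only [hm, if_false]
      simp only [ContinuousLinearMap.smul_apply, evalL_apply, unitVec_apply, smul_eq_mul]
      rw [if_neg (fun h => hm h.symm), mul_zero]

theorem smooth_point_c0_decomposition (x : c₀) (hx : SmoothPoint c₀ x) :
    ∃ n : ℕ, |x n| = ‖x‖ ∧ (∀ m : ℕ, m ≠ n → |x m| < ‖x‖) ∧
      MSumDecomp (Submodule.span ℝ {unitVec n}) (coordZero n) ∧
      infDist x ((Submodule.span ℝ {unitVec n} : Submodule ℝ c₀) : Set c₀) < ‖x‖ := by
  obtain ⟨hx0, f0, hf0, huniq⟩ := hx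
  have hxpos : 0 < ‖x‖ := norm_pos_iff.mpr hx0
  -- the norm is attained
  have hF : {m : ℕ | ‖x‖ / 2 ≤ |x m|}.Finite := c0_finite x _ (by linarith)
  have hFne : {m : ℕ | ‖x‖ / 2 ≤ |x m|}.Nonempty := by
    by_contra h
    rw [Set.not_nonempty_iff_eq_empty] at h
    have hle : ‖x‖ ≤ ‖x‖ / 2 := by
      refine c0_norm_le x _ (by linarith) fun m => ?_
      by_contra hm
      push_neg at hm
      have hmem : m ∈ {m : ℕ | ‖x‖ / 2 ≤ |x m|} := hm.le
      rw [h] at hmem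
      exact absurd hmem (Set.notMem_empty m)
    linarith
  obtain ⟨n, hnF, hnmax⟩ := hF.toFinset.exists_max_image (fun m => |x m|) (by
    rwa [← Set.Finite.toFinset_nonempty hF] at hFne)
  have hxn : |x n| = ‖x‖ := by
    refine le_antisymm (c0_abs_le x n) (c0_norm_le x _ (abs_nonneg _) fun m => ?_)
    by_cases hm : m ∈ hF.toFinset
    · exact hnmax m hm
    · rw [Set.Finite.mem_toFinset] at hm hnF
      have h1 : |x m| < ‖x‖ / 2 := not_le.mp hm
      have h2 : ‖x‖ / 2 ≤ |x n| := hnF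
      linarith
  have hxn0 : x n ≠ 0 := by
    intro h
    rw [h, abs_zero] at hxn
    linarith
  -- strict inequality elsewhere
  have hstrict : ∀ m : ℕ, m ≠ n → |x m| < ‖x‖ := by
    intro m hmn
    rcases lt_or_eq_of_le (c0_abs_le x m) with h | h
    · exact h
    · exfalso
      have hxm0 : x m ≠ 0 := by
        intro h0
        rw [h0, abs_zero] at h
        linarith
      obtain ⟨fn, hfn, hfnval⟩ := exists_attaining x n hxn0 hxn
      obtain ⟨fm, hfm, hfmval⟩ := exists_attaining x m hxm0 h
      have heq : fn = fm := (huniq fn hfn).trans (huniq fm hfm).symm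
      have h1 : fn (unitVec n) = Real.sign (x n) := by rw [hfnval n, if_pos rfl]
      have h2 : fm (unitVec n) = 0 := by rw [hfmval n, if_neg (fun hh => hmn hh.symm)]
      rw [heq, h2] at h1
      exact hxn0 (Real.sign_eq_zero_iff.mp h1.symm)
  refine ⟨n, hxn, hstrict, ⟨?_, ?_, ?_, ?_, ?_⟩, ?_⟩
  · exact (Submodule.span ℝ {unitVec n}).closed_of_finiteDimensional
  · have : (coordZero n : Set c₀) = evalL n ⁻¹' {0} := rfl
    rw [this]
    exact isClosed_singleton.preimage (evalL n).continuous
  · rw [eq_bot_iff]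
    intro y hy
    obtain ⟨hy1, hy2⟩ := Submodule.mem_inf.mp hy
    obtain ⟨c, rfl⟩ := Submodule.mem_span_singleton.mp hy1
    have hy2' : (c • unitVec n) n = 0 := hy2
    have hc : c = 0 := by simpa using hy2'
    rw [hc, zero_smul]
    exact Submodule.zero_mem ⊥
  · rw [eq_top_iff]
    intro y _
    refine Submodule.mem_sup.mpr ⟨(y n) • unitVec n,
      Submodule.smul_mem _ _ (Submodule.mem_span_singleton_self _),
      y - (y n) • unitVec n, ?_, by abel⟩
    show (y - (y n) • unitVec n) n = 0
    simp
  · intro m hm n' hn'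
    obtain ⟨c, rfl⟩ := Submodule.mem_span_singleton.mp hm
    have hn'0 : n' n = 0 := hn'
    have hnormc : ‖c • unitVec n‖ = |c| := by
      rw [norm_smul (α := ℝ) (β := c₀) c (unitVec n), norm_unitVec, mul_one, Real.norm_eq_abs]
    rw [hnormc]
    have hcoord : ∀ k, (c • unitVec n + n') k = (if k = n then c else n' k) := by
      intro k
      by_cases hk : k = n <;> simp [hk, hn'0]
    apply le_antisymm
    · refine c0_norm_le _ _ (le_max_of_le_left (abs_nonneg c)) fun k => ?_
      rw [hcoord k]
      by_cases hk : k = n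
      · rw [if_pos hk]; exact le_max_left _ _
      · rw [if_neg hk]; exact le_max_of_le_right (c0_abs_le n' k)
    · refine max_le ?_ ?_
      · have := c0_abs_le (c • unitVec n + n') n
        rwa [hcoord n, if_pos rfl] at this
      · refine c0_norm_le n' _ (norm_nonneg _) fun k => ?_
        by_cases hk : k = n
        · rw [hk, hn'0, abs_zero]; exact norm_nonneg _
        · have := c0_abs_le (c • unitVec n + n') k
          rwa [hcoord k, if_neg hk] at this
  · -- distance estimate
    set z : c₀ := x - (x n) • unitVec n with hz
    have hmem : (x n) • unitVec n ∈ (Submodule.span ℝ {unitVec n} : Submodule ℝ c₀) :=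
      Submodule.smul_mem _ _ (Submodule.mem_span_singleton_self _)
    have hle : infDist x ((Submodule.span ℝ {unitVec n} : Submodule ℝ c₀) : Set c₀) ≤ ‖z‖ := by
      have h := infDist_le_dist_of_mem (x := x) hmem
      rwa [dist_eq_norm] at h
    refine lt_of_le_of_lt hle ?_
    have hzcoord : ∀ k, z k = if k = n then 0 else x k := by
      intro k
      by_cases hk : k = n <;> simp [hz, hk]
    have hzlt : ∀ k, |z k| < ‖x‖ := by
      intro k
      rw [hzcoord k]
      by_cases hk : k = n
      · rw [if_pos hk, abs_zero]; exact hxpos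
      · rw [if_neg hk]; exact hstrict k hk
    have hG : {m : ℕ | ‖x‖ / 2 ≤ |z m|}.Finite := c0_finite z _ (by linarith)
    rcases Set.eq_empty_or_nonempty {m : ℕ | ‖x‖ / 2 ≤ |z m|} with hGe | hGne
    · have : ‖z‖ ≤ ‖x‖ / 2 := by
        refine c0_norm_le z _ (by linarith) fun m => ?_
        by_contra hm
        push_neg at hm
        have hmem : m ∈ {m : ℕ | ‖x‖ / 2 ≤ |z m|} := hm.le
        rw [hGe] at hmem
        exact absurd hmem (Set.notMem_empty m)
      linarith
    · obtain ⟨m0, hm0G, hm0max⟩ := hG.toFinset.exists_max_image (fun m => |z m|) (by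
        rwa [← Set.Finite.toFinset_nonempty hG] at hGne)
      have hb : max (|z m0|) (‖x‖ / 2) < ‖x‖ := max_lt (hzlt m0) (by linarith)
      refine lt_of_le_of_lt ?_ hb
      refine c0_norm_le z _ (le_max_of_le_left (abs_nonneg _)) fun k => ?_
      by_cases hk : k ∈ hG.toFinset
      · exact le_max_of_le_left (hm0max k hk)
      · rw [Set.Finite.mem_toFinset] at hk
        exact le_max_of_le_right (not_le.mp hk).le
end
end
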